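/- arXiv:1607.07593 — 8 statements merged into one kernel-verified Lean document; each statement's English description precedes it below -/
import Mathlib

section
/- Let g, Ψ ∈ ℂ[x,y] be polynomials. Then Ψ divides the polynomial H(g·Ψ) − g³·H(Ψ), where H(u) = u_xx·u_y² − 2·u_xy·u_x·u_y + u_yy·u_x². In other words, on the curve {Ψ = 0} one has H(g·Ψ) = g³·H(Ψ). -/
open MvPolynomial

/-- `H(u) = u_xx u_y² - 2 u_xy u_x u_y + u_yy u_x²` for a complex polynomial `u` in
two variables. -/
noncomputable def hessH (u : MvPolynomial (Fin 2) ℂ) : MvPolynomial (Fin 2) ℂ :=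
  pderiv 0 (pderiv 0 u) * (pderiv 1 u) ^ 2
    - 2 * pderiv 1 (pderiv 0 u) * pderiv 0 u * pderiv 1 u
    + pderiv 1 (pderiv 1 u) * (pderiv 0 u) ^ 2

/-- On the curve `{Ψ = 0}` one has `H(g·Ψ) = g³·H(Ψ)`: the polynomial `Ψ` divides
`H(g·Ψ) - g³·H(Ψ)`. -/
theorem psi_dvd_hess_mul_sub (g Ψ : MvPolynomial (Fin 2) ℂ) :
    Ψ ∣ hessH (g * Ψ) - g ^ 3 * hessH Ψ := by
  refine ⟨(1 : MvPolynomial (Fin 2) ℂ) * (pderiv 1 g) * (pderiv 1 g) * (pderiv 0 (pderiv 0 g)) * Ψ * Ψ + (2 : MvPolynomial (Fin 2) ℂ) * g * (pderiv 1 g) * (pderiv 0 (pderiv 0 g)) * Ψ * (pderiv 1 Ψ) + (1 : MvPolynomial (Fin 2) ℂ) * g * g * (pderiv 0 (pderiv 0 g)) * (pderiv 1 Ψ) * (pderiv 1 Ψ) + (1 : MvPolynomial (Fin 2) ℂ) * g * (pderiv 1 g) * (pderiv 1 g) * Ψ * (pderiv 0 (pderiv 0 Ψ)) + (2 : MvPolynomial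 (Fin 2) ℂ) * g * g * (pderiv 1 g) * (pderiv 1 Ψ) * (pderiv 0 (pderiv 0 Ψ)) + (-2 : MvPolynomial (Fin 2) ℂ) * (pderiv 0 g) * (pderiv 1 g) * (pderiv 1 (pderiv 0 g)) * Ψ * Ψ + (-2 : MvPolynomial (Fin 2) ℂ) * g * (pderiv 0 g) * (pderiv 1 (pderiv 0 g)) * Ψ * (pderiv 1 Ψ) + (-2 : MvPolynomial (Fin 2) ℂ) * g * (pderiv 1 g) * (pderiv 1 (pderiv 0 g)) * Ψ * (pderiv 0 Ψ) + (-2 : MvPolynomial (Fin 2) ℂ) * g * g * (pderiv 1 (pderiv 0 g)) * (pderiv 0 Ψ) * (pderiv 1 Ψ) + (-2 : MvPolynomial (Fin 2) ℂ) * g * (pderiv 0 g) * (pderiv 0 g) * (pderiv 1 Ψ) * (pderiv 1 Ψ) + (-2 : MvPolynomial (Fin 2) ℂ) * g * (pderiv 1 g) * (pderiv 1 g) * (pderiv 0 Ψ) * (pderiv 0 Ψ) + (-2 : MvPolynomial (Fin 2) ℂ) * g * (pderiv 0 g) * (pderiv 1 g) * Ψ * (pderiv 1 (pderiv 0 Ψ))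 + (-2 : MvPolynomial (Fin 2) ℂ) * g * g * (pderiv 0 g) * (pderiv 1 Ψ) * (pderiv 1 (pderiv 0 Ψ)) + (-2 : MvPolynomial (Fin 2) ℂ) * g * g * (pderiv 1 g) * (pderiv 0 Ψ) * (pderiv 1 (pderiv 0 Ψ)) + (1 : MvPolynomial (Fin 2) ℂ) * (pderiv 0 g) * (pderiv 0 g) * (pderiv 1 (pderiv 1 g)) * Ψ * Ψ + (2 : MvPolynomial (Fin 2) ℂ) * g * (pderiv 0 g) * (pderiv 1 (pderiv 1 g)) * Ψ * (pderiv 0 Ψ) + (1 : MvPolynomial (Fin 2) ℂ) * g * g * (pderiv 1 (pderiv 1 g)) * (pderiv 0 Ψ) * (pderiv 0 Ψ) + (4 : MvPolynomial (Fin 2) ℂ) * g * (pderiv 0 g) * (pderiv 1 g) * (pderiv 0 Ψ) * (pderiv 1 Ψ) + (1 : MvPolynomial (Fin 2) ℂ) * g * (pderiv 0 g) * (pderiv 0 g) * Ψ * (pderiv 1 (pderiv 1 Ψ)) + (2 : MvPolynomial (Fin 2) ℂ) * g * g * (pderiv 0 g) * (pderiv 0 Ψ) * (pderiv 1 (pderiv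 1 Ψ)), ?_⟩
  simp only [hessH, pderiv_mul, map_add, map_mul]
  ring
end

section
/- Let p > q ≥ 1 be integers and let w be holomorphic near 0 ∈ ℂ of the form w(t) = t^p·h(t), h holomorphic, h(0) ≠ 0; for t ≠ 0 small, let L_t = {(t^q + s·q·t^{q−1}, w(t) + s·w'(t)) : s ∈ ℂ} be the tangent line to the curve b(t) = (t^q, w(t)). Let z_a, w_a be holomorphic near 0 with z_a(0) = w_a(0) = 0, w_a not identically zero, and with the order of vanishing of z_a at 0 at least the order of vanishing of w_a at 0 (i.e., the germ a(τ) = (z_a(τ), w_a(τ)) is transverse to the z-axis). Suppose τ(t) is defined for all sufficiently small t ≠ 0, τ(t) → 0 as t → 0, and (z_a(τ(t)), w_a(τ(t))) ∈ L_t for all small t ≠ 0. Then w_a(τ(t)) / w(t) → 1 − p/q as t → 0, and z_a(τ(t)) = O(t^p) as t → 0. -/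
open Filter Topology Asymptotics

lemma aux_isBigO_of_order_le (f g : ℂ → ℂ) (hf : AnalyticAt ℂ f 0) (hg : AnalyticAt ℂ g 0)
    (hgne : ¬ ∀ᶠ z in 𝓝 (0 : ℂ), g z = 0) (hord : analyticOrderAt g 0 ≤ analyticOrderAt f 0) :
    f =O[𝓝 (0 : ℂ)] g := by
  have hgt : analyticOrderAt g 0 ≠ ⊤ := fun hc => hgne (analyticOrderAt_eq_top.mp hc)
  obtain ⟨n, hn⟩ : ∃ n : ℕ, analyticOrderAt g 0 = n := by
    lift analyticOrderAt g 0 to ℕ using hgt with n hn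
    exact ⟨n, rfl⟩
  obtain ⟨k, hk, hk0, hgk⟩ := hg.analyticOrderAt_eq_natCast.mp hn
  -- z ^ n =O g
  have h1 : (fun z : ℂ => z ^ n) =O[𝓝 (0 : ℂ)] g := by
    rw [isBigO_iff]
    refine ⟨2 / ‖k 0‖, ?_⟩
    have hk0' : (0:ℝ) < ‖k 0‖ := norm_pos_iff.mpr hk0
    have hkc : ∀ᶠ z in 𝓝 (0 : ℂ), ‖k 0‖ / 2 < ‖k z‖ :=
      hk.continuousAt.norm.eventually_const_lt (by linarith)
    filter_upwards [hkc, hgk] with z hz hgz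
    rw [hgz]
    simp only [sub_zero, smul_eq_mul, norm_mul, norm_pow]
    rw [div_mul_eq_mul_div, le_div_iff₀ hk0']
    nlinarith [norm_nonneg z, pow_nonneg (norm_nonneg z) n, hz.le]
  by_cases hft : analyticOrderAt f 0 = ⊤
  · have hfz : ∀ᶠ z in 𝓝 (0 : ℂ), f z = 0 := analyticOrderAt_eq_top.mp hft
    rw [isBigO_iff]
    exact ⟨0, by filter_upwards [hfz] with z hz; simp [hz]⟩
  · obtain ⟨m, hm⟩ : ∃ m : ℕ, analyticOrderAt f 0 = m := by
      lift analyticOrderAt f 0 to ℕ using hft with m hm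
      exact ⟨m, rfl⟩
    have hnm : n ≤ m := by
      rw [hn, hm] at hord
      exact_mod_cast hord
    obtain ⟨u, hu, hu0, hfu⟩ := hf.analyticOrderAt_eq_natCast.mp hm
    -- f =O z ^ n
    have h2 : f =O[𝓝 (0 : ℂ)] (fun z : ℂ => z ^ n) := by
      rw [isBigO_iff]
      refine ⟨‖u 0‖ + 1, ?_⟩
      have huc : ∀ᶠ z in 𝓝 (0 : ℂ), ‖u z‖ < ‖u 0‖ + 1 :=
        hu.continuousAt.norm.eventually_lt_const (by linarith)
      have hz1 : ∀ᶠ z in 𝓝 (0 : ℂ), ‖z‖ ≤ 1 := by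
        filter_upwards [Metric.closedBall_mem_nhds (0:ℂ) one_pos] with z hz
        simpa [Metric.mem_closedBall] using hz
      filter_upwards [huc, hz1, hfu] with z hzu hz1 hfz
      rw [hfz]
      simp only [sub_zero, smul_eq_mul, norm_mul, norm_pow]
      have : ‖z‖ ^ m ≤ ‖z‖ ^ n := pow_le_pow_of_le_one (norm_nonneg z) hz1 hnm
      nlinarith [pow_nonneg (norm_nonneg z) m, pow_nonneg (norm_nonneg z) n,
        norm_nonneg (u z), norm_nonneg (u 0), hzu.le]
    exact h2.trans h1
open Filter Topology Asymptotics


/-- Asymptotics of the intersection points of the tangent line to the nonlinear germ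
`b(t) = (t^q, w(t))`, `w(t) = t^p h(t)`, `h(0) ≠ 0`, with a germ `a(τ) = (z_a(τ), w_a(τ))`
transverse to the `z`-axis: any family of intersection points `a(τ(t)) ∈ T_t b` with
`τ(t) → 0` satisfies `w_a(τ(t)) ∼ (1 - p/q)·w(t)` and `z_a(τ(t)) = O(t^p)`. -/
theorem intersection_with_transverse_germ_asymptotics
    (p q : ℕ) (hq : 1 ≤ q) (hpq : q < p)
    (h : ℂ → ℂ) (hh : AnalyticAt ℂ h 0) (hh0 : h 0 ≠ 0)
    (w : ℂ → ℂ) (hw : w = fun t : ℂ => t ^ p * h t)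
    (za wa : ℂ → ℂ) (hza : AnalyticAt ℂ za 0) (hwa : AnalyticAt ℂ wa 0)
    (hza0 : za 0 = 0) (hwa0 : wa 0 = 0)
    (hwa_ne : ¬ ∀ᶠ τ in 𝓝 (0 : ℂ), wa τ = 0)
    (hord : analyticOrderAt wa 0 ≤ analyticOrderAt za 0)
    (τ : ℂ → ℂ) (hτ : Tendsto τ (𝓝[≠] (0 : ℂ)) (𝓝 0))
    (hmem : ∀ᶠ t in 𝓝[≠] (0 : ℂ), ∃ s : ℂ,
      za (τ t) = t ^ q + s * (q : ℂ) * t ^ (q - 1) ∧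
      wa (τ t) = w t + s * deriv w t) :
    Tendsto (fun t : ℂ => wa (τ t) / w t) (𝓝[≠] 0) (𝓝 (1 - (p : ℂ) / (q : ℂ))) ∧
      (fun t : ℂ => za (τ t)) =O[𝓝[≠] (0 : ℂ)] fun t : ℂ => t ^ p := by
  
  have hq0 : (q : ℂ) ≠ 0 := Nat.cast_ne_zero.mpr (by omega)
  set A : ℂ → ℂ := fun t => wa (τ t) with hA
  set Z : ℂ → ℂ := fun t => za (τ t) with hZ
  have hhd : AnalyticAt ℂ (deriv h) 0 :=
    (AnalyticOnNhd.deriv (fun z hz => hz : AnalyticOnNhd ℂ h {z | AnalyticAt ℂ h z})) 0 hh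
  set B : ℂ → ℂ := fun t => (p : ℂ) * h t + t * deriv h t with hB
  have hBc : ContinuousAt B 0 :=
    (continuousAt_const.mul hh.continuousAt).add
      (continuousAt_id.mul hhd.continuousAt)
  have hB0 : B 0 = (p : ℂ) * h 0 := by simp [hB]
  -- key identity
  have hkey : ∀ᶠ t in 𝓝[≠] (0 : ℂ),
      (q : ℂ) * A t = t ^ p * ((q : ℂ) * h t - B t) + Z t * t ^ (p - q) * B t := by
    have han : ∀ᶠ t in 𝓝[≠] (0 : ℂ), AnalyticAt ℂ h t :=
      nhdsWithin_le_nhds hh.eventually_analyticAt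
    filter_upwards [hmem, han, self_mem_nhdsWithin] with t hm hat (ht : t ≠ 0)
    obtain ⟨s, h1, h2⟩ := hm
    have hd : deriv w t = (p : ℂ) * t ^ (p - 1) * h t + t ^ p * deriv h t := by
      rw [hw, deriv_fun_mul (differentiableAt_pow p) hat.differentiableAt, deriv_pow_field]
    obtain ⟨k1, e2⟩ : ∃ k1, q = k1 + 1 := ⟨q - 1, by omega⟩
    obtain ⟨k2, e5⟩ : ∃ k2, p - q = k2 ∧ True := ⟨p - q, rfl, trivial⟩
    have e1 : p = k2 + k1 + 1 := by omega
    have e3 : p - 1 = k2 + k1 := by omega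
    have e4 : q - 1 = k1 := by omega
    have ep : t ^ p = t ^ k2 * t ^ k1 * t := by rw [e1]; ring
    have ep1 : t ^ (p - 1) = t ^ k2 * t ^ k1 := by rw [e3]; ring
    have eqq : t ^ q = t ^ k1 * t := by rw [e2]; ring
    have eq1 : t ^ (q - 1) = t ^ k1 := by rw [e4]
    have epq : t ^ (p - q) = t ^ k2 := by rw [e5.1]
    simp only [hA, hZ, hB]
    rw [h2, hd, hw, h1]
    simp only [ep, ep1, eqq, eq1, epq]
    ring
  -- Z is O(A)
  have hZA : Z =O[𝓝[≠] (0 : ℂ)] A := by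
    have hO : za =O[𝓝 (0 : ℂ)] wa := aux_isBigO_of_order_le za wa hza hwa hwa_ne hord
    exact hO.comp_tendsto hτ
  -- A is O(t^p)
  have hAp : A =O[𝓝[≠] (0 : ℂ)] fun t : ℂ => t ^ p := by
    obtain ⟨C, hCpos, hC⟩ := hZA.exists_pos
    rw [isBigOWith_iff] at hC
    set M : ℝ := ‖(q : ℂ) * h 0 - B 0‖ + 1 with hM
    have hM0 : (0:ℝ) < M := by positivity
    have hqR : (0:ℝ) < (q : ℝ) := by exact_mod_cast (by omega : 0 < q)
    have hBb : ∀ᶠ t in 𝓝[≠] (0 : ℂ), ‖B t‖ < ‖B 0‖ + 1 :=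
      nhdsWithin_le_nhds (hBc.norm.eventually_lt_const (by linarith [norm_nonneg (B 0)]))
    have hMb : ∀ᶠ t in 𝓝[≠] (0 : ℂ), ‖(q : ℂ) * h t - B t‖ < M :=
      nhdsWithin_le_nhds (((continuousAt_const.mul hh.continuousAt).sub hBc).norm.eventually_lt_const
        (by simp [hM]))
    have hsm : ∀ᶠ t in 𝓝[≠] (0 : ℂ), ‖t‖ ^ (p - q) * (C * (‖B 0‖ + 1)) < (q : ℝ) / 2 := by
      have ht0 : Tendsto (fun t : ℂ => ‖t‖ ^ (p - q) * (C * (‖B 0‖ + 1))) (𝓝[≠] (0 : ℂ))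
          (𝓝 (0 * (C * (‖B 0‖ + 1)))) := by
        refine Tendsto.mul ?_ tendsto_const_nhds
        have : Tendsto (fun t : ℂ => ‖t‖ ^ (p - q)) (𝓝 (0 : ℂ)) (𝓝 (‖(0:ℂ)‖ ^ (p - q))) :=
          (continuous_norm.pow (p - q)).tendsto 0
        simpa [zero_pow (by omega : p - q ≠ 0)] using this.mono_left nhdsWithin_le_nhds
      rw [zero_mul] at ht0
      exact ht0.eventually_lt_const (by positivity)
    rw [isBigO_iff]
    refine ⟨2 * M / q, ?_⟩
    filter_upwards [hkey, hC, hBb, hMb, hsm] with t hk hCt hBt hMt hst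
    have n1 : (q : ℝ) * ‖A t‖ ≤ ‖t‖ ^ p * M + (C * ‖A t‖) * (‖t‖ ^ (p - q) * (‖B 0‖ + 1)) := by
      have c1 : (q : ℝ) * ‖A t‖ = ‖(q : ℂ) * A t‖ := by
        rw [norm_mul]; norm_num
      rw [c1, hk]
      calc ‖t ^ p * ((q : ℂ) * h t - B t) + Z t * t ^ (p - q) * B t‖
          ≤ ‖t ^ p * ((q : ℂ) * h t - B t)‖ + ‖Z t * t ^ (p - q) * B t‖ := norm_add_le _ _
        _ ≤ ‖t‖ ^ p * M + (C * ‖A t‖) * (‖t‖ ^ (p - q) * (‖B 0‖ + 1)) := by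
            simp only [norm_mul, norm_pow]
            have hZt : ‖Z t‖ ≤ C * ‖A t‖ := hCt
            have t1 : ‖t‖ ^ p * ‖(q : ℂ) * h t - B t‖ ≤ ‖t‖ ^ p * M :=
              mul_le_mul_of_nonneg_left hMt.le (pow_nonneg (norm_nonneg t) p)
            have b1 : ‖Z t‖ * ‖t‖ ^ (p - q) ≤ C * ‖A t‖ * ‖t‖ ^ (p - q) :=
              mul_le_mul_of_nonneg_right hZt (pow_nonneg (norm_nonneg t) _)
            have t2 : ‖Z t‖ * ‖t‖ ^ (p - q) * ‖B t‖
                ≤ (C * ‖A t‖) * (‖t‖ ^ (p - q) * (‖B 0‖ + 1)) := by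
              calc ‖Z t‖ * ‖t‖ ^ (p - q) * ‖B t‖
                  ≤ C * ‖A t‖ * ‖t‖ ^ (p - q) * (‖B 0‖ + 1) :=
                    mul_le_mul b1 hBt.le (norm_nonneg _) (by positivity)
                _ = (C * ‖A t‖) * (‖t‖ ^ (p - q) * (‖B 0‖ + 1)) := by ring
            linarith
    have n2 : (C * ‖A t‖) * (‖t‖ ^ (p - q) * (‖B 0‖ + 1)) ≤ (q : ℝ) / 2 * ‖A t‖ := by
      have := mul_le_mul_of_nonneg_left hst.le (norm_nonneg (A t))
      nlinarith [norm_nonneg (A t)]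
    rw [norm_pow, div_mul_eq_mul_div, le_div_iff₀ hqR]
    nlinarith [pow_nonneg (norm_nonneg t) p]
  have hZp : Z =O[𝓝[≠] (0 : ℂ)] fun t : ℂ => t ^ p := hZA.trans hAp
  refine ⟨?_, hZp⟩
  -- Z / t^q → 0
  have hZq : Tendsto (fun t : ℂ => Z t / t ^ q) (𝓝[≠] (0 : ℂ)) (𝓝 0) := by
    have hlo : (fun t : ℂ => t ^ p) =o[𝓝[≠] (0 : ℂ)] fun t : ℂ => t ^ q := by
      have hfe : (fun t : ℂ => t ^ p) = fun t : ℂ => t ^ q * t ^ (p - q) :=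
        funext fun t => by rw [← pow_add]; congr 1; omega
      rw [hfe]
      have h1 : (fun t : ℂ => t ^ (p - q)) =o[𝓝[≠] (0 : ℂ)] (fun _ : ℂ => (1 : ℂ)) := by
        rw [isLittleO_one_iff]
        have : Tendsto (fun t : ℂ => t ^ (p - q)) (𝓝 (0 : ℂ)) (𝓝 ((0:ℂ) ^ (p - q))) :=
          (continuous_pow (p - q)).tendsto 0
        simpa [zero_pow (by omega : p - q ≠ 0)] using this.mono_left nhdsWithin_le_nhds
      simpa using (isBigO_refl (fun t : ℂ => t ^ q) (𝓝[≠] (0 : ℂ))).mul_isLittleO h1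
    exact (hZp.trans_isLittleO hlo).tendsto_div_nhds_zero
  have hne : ∀ᶠ t in 𝓝[≠] (0 : ℂ), h t ≠ 0 :=
    nhdsWithin_le_nhds (hh.continuousAt.eventually_ne hh0)
  have heq : (fun t : ℂ => A t / w t) =ᶠ[𝓝[≠] (0 : ℂ)] fun t : ℂ =>
      ((q : ℂ) * h t - B t) / ((q : ℂ) * h t) + (Z t / t ^ q) * (B t / ((q : ℂ) * h t)) := by
    filter_upwards [hkey, hne, self_mem_nhdsWithin] with t hk hht (ht : t ≠ 0)
    have htp : (t : ℂ) ^ p ≠ 0 := pow_ne_zero _ ht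
    have htq : (t : ℂ) ^ q ≠ 0 := pow_ne_zero _ ht
    have ept : t ^ (p - q) * t ^ q = t ^ p := by rw [← pow_add]; congr 1; omega
    rw [← ept] at hk
    have hAt : A t = (t ^ (p - q) * t ^ q * ((q : ℂ) * h t - B t) + Z t * t ^ (p - q) * B t) / q := by
      rw [eq_div_iff hq0]
      linear_combination hk
    have htpq : t ^ (p - q) ≠ 0 := pow_ne_zero _ ht
    show A t / w t = _
    rw [hw]
    simp only
    rw [← ept, hAt]
    rw [div_div, div_mul_div_comm,
      div_add_div _ _ (mul_ne_zero hq0 hht) (mul_ne_zero htq (mul_ne_zero hq0 hht)),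
      div_eq_div_iff
        (mul_ne_zero hq0 (mul_ne_zero (mul_ne_zero htpq htq) hht))
        (mul_ne_zero (mul_ne_zero hq0 hht) (mul_ne_zero htq (mul_ne_zero hq0 hht)))]
    ring
  have hcont : Tendsto (fun t : ℂ => ((q : ℂ) * h t - B t) / ((q : ℂ) * h t)) (𝓝[≠] (0 : ℂ))
      (𝓝 (((q : ℂ) * h 0 - B 0) / ((q : ℂ) * h 0))) :=
    (((continuousAt_const.mul hh.continuousAt).sub hBc).div
      (continuousAt_const.mul hh.continuousAt) (mul_ne_zero hq0 hh0)).tendsto.mono_left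
      nhdsWithin_le_nhds
  have hcont2 : Tendsto (fun t : ℂ => B t / ((q : ℂ) * h t)) (𝓝[≠] (0 : ℂ))
      (𝓝 (B 0 / ((q : ℂ) * h 0))) :=
    (hBc.div (continuousAt_const.mul hh.continuousAt) (mul_ne_zero hq0 hh0)).tendsto.mono_left
      nhdsWithin_le_nhds
  have hlim := hcont.add (hZq.mul hcont2)
  have hval : ((q : ℂ) * h 0 - B 0) / ((q : ℂ) * h 0) + 0 * (B 0 / ((q : ℂ) * h 0))
      = 1 - (p : ℂ) / (q : ℂ) := by
    rw [hB0]
    field_simp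
    ring
  rw [hval] at hlim
  exact hlim.congr' heq.symm
end

section
/- Let q_b < p_b and q_a < p_a be positive integers with p_a/q_a = p_b/q_b = r. Let w_b(t) = t^{p_b}·h_b(t) and w_a(τ) = τ^{p_a}·h_a(τ) be holomorphic near 0 ∈ ℂ with h_b(0) = c_b ≠ 0 and h_a(0) = c_a ≠ 0. For small t ≠ 0 let L_t = {(t^{q_b} + s·q_b·t^{q_b−1}, w_b(t) + s·w_b'(t)) : s ∈ ℂ} be the tangent line to the curve b(t) = (t^{q_b}, w_b(t)). Suppose τ(t) is defined for all sufficiently small t ≠ 0, τ(t) → 0 as t → 0, the point (τ(t)^{q_a}, w_a(τ(t))) lies on L_t for all small t ≠ 0, and the limit L = lim_{t→0} τ(t)^{q_a} / t^{q_b} exists in ℂ. Then there exists ζ ∈ ℂ with (c_a/c_b)·ζ^{p_a} − r·ζ^{q_a} + r − 1 = 0 and ζ^{q_a} = L. -/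
open Filter Topology

private lemma aux_tangent_alg (t s W H Dh T u v P Q : ℂ) (ht : t ≠ 0) (hu : u ≠ 0)
    (hv : v ≠ 0) (hQ : Q ≠ 0) (e1 : T = u*t + s*Q*u)
    (e2 : W = v*t*H + s*(P*v*H + v*t*Dh)) :
    W/(v*t) = H + (T/(u*t) - 1)*((P*H + t*Dh)/Q) := by
  rw [e1, e2]
  field_simp
  ring

/-- Intersections of the tangent line to the germ `b(t) = (t^{q_b}, w_b(t))` with a germ
`a(τ) = (τ^{q_a}, w_a(τ))` tangent to it, having the same projective Puiseux exponent
`r = p_a/q_a = p_b/q_b`: the limit `L` of `τ(t)^{q_a}/t^{q_b}` along a family of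
intersection points is the `q_a`-th power of a root `ζ` of the polynomial
`R_{p_a,q_a,c}(ζ) = (c_a/c_b)·ζ^{p_a} - r·ζ^{q_a} + r - 1`. -/
theorem intersection_with_tangent_germ_same_puiseux_exponent
    (pa qa pb qb : ℕ) (hqa : 1 ≤ qa) (hpa : qa < pa) (hqb : 1 ≤ qb) (hpb : qb < pb)
    (hratio : pa * qb = pb * qa)
    (r : ℂ) (hr : r = (pa : ℂ) / (qa : ℂ))
    (ca cb : ℂ) (hca : ca ≠ 0) (hcb : cb ≠ 0)
    (ha hb : ℂ → ℂ) (hha : AnalyticAt ℂ ha 0) (hhb : AnalyticAt ℂ hb 0)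
    (hha0 : ha 0 = ca) (hhb0 : hb 0 = cb)
    (wa wb : ℂ → ℂ)
    (hwa : wa = fun t : ℂ => t ^ pa * ha t) (hwb : wb = fun t : ℂ => t ^ pb * hb t)
    (τ : ℂ → ℂ) (hτ : Tendsto τ (𝓝[≠] (0 : ℂ)) (𝓝 0))
    (hmem : ∀ᶠ t in 𝓝[≠] (0 : ℂ), ∃ s : ℂ,
      τ t ^ qa = t ^ qb + s * (qb : ℂ) * t ^ (qb - 1) ∧
      wa (τ t) = wb t + s * deriv wb t)
    (L : ℂ) (hL : Tendsto (fun t : ℂ => τ t ^ qa / t ^ qb) (𝓝[≠] 0) (𝓝 L)) :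
    ∃ ζ : ℂ, (ca / cb) * ζ ^ pa - r * ζ ^ qa + r - 1 = 0 ∧ ζ ^ qa = L := by

  classical
  obtain ⟨pb', rfl⟩ : ∃ pb'', pb = pb'' + 1 := ⟨pb - 1, by omega⟩
  obtain ⟨qb', rfl⟩ : ∃ qb'', qb = qb'' + 1 := ⟨qb - 1, by omega⟩
  have hqaC : (qa : ℂ) ≠ 0 := Nat.cast_ne_zero.mpr (by omega)
  have hqbC : ((qb' + 1 : ℕ) : ℂ) ≠ 0 := Nat.cast_ne_zero.mpr (by omega)
  have hratioC : (pa : ℂ) * (qb' + 1 : ℕ) = ((pb' + 1 : ℕ) : ℂ) * qa := by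
    exact_mod_cast congrArg (fun n : ℕ => (n : ℂ)) hratio
  have hrb : r = ((pb' + 1 : ℕ) : ℂ) / ((qb' + 1 : ℕ) : ℂ) := by
    rw [hr]
    rw [div_eq_div_iff hqaC hqbC]
    linear_combination hratioC
  have hr1 : r ≠ 1 := by
    rw [hr]
    intro h
    rw [div_eq_one_iff_eq hqaC] at h
    have : pa = qa := Nat.cast_injective h
    omega
  set M : ℂ := 1 + (L - 1) * r with hM
  set K : ℂ := cb * M / ca with hK
  have ht0 : ∀ᶠ t in 𝓝[≠] (0 : ℂ), t ≠ 0 := eventually_mem_nhdsWithin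
  have hbanal : ∀ᶠ t in 𝓝[≠] (0 : ℂ), AnalyticAt ℂ hb t :=
    hhb.eventually_analyticAt.filter_mono nhdsWithin_le_nhds
  -- key pointwise identity after eliminating s
  have hkey : ∀ᶠ t in 𝓝[≠] (0 : ℂ),
      wa (τ t) / t ^ (pb' + 1) = hb t + (τ t ^ qa / t ^ (qb' + 1) - 1) *
        ((((pb' + 1 : ℕ) : ℂ) * hb t + t * deriv hb t) / ((qb' + 1 : ℕ) : ℂ)) := by
    filter_upwards [hmem, ht0, hbanal] with t hm ht hanal
    obtain ⟨s, e1, e2⟩ := hm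
    have hd : deriv wb t = ((pb' + 1 : ℕ) : ℂ) * t ^ pb' * hb t + t ^ (pb' + 1) * deriv hb t := by
      rw [hwb, deriv_fun_mul (differentiableAt_pow (pb' + 1)) hanal.differentiableAt, deriv_pow_field]
      simp [Nat.add_sub_cancel]
    have e1' : τ t ^ qa = t ^ qb' * t + s * ((qb' + 1 : ℕ) : ℂ) * t ^ qb' := by
      rw [e1]; simp only [Nat.add_sub_cancel, pow_succ]
    have e2' : wa (τ t) = t ^ pb' * t * hb t +
        s * (((pb' + 1 : ℕ) : ℂ) * t ^ pb' * hb t + t ^ pb' * t * deriv hb t) := by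
      rw [e2, hd, hwb]; simp only [pow_succ]
    have hu : t ^ qb' ≠ 0 := pow_ne_zero _ ht
    have hv : t ^ pb' ≠ 0 := pow_ne_zero _ ht
    simp only [pow_succ]
    exact aux_tangent_alg t s _ _ _ _ _ _ _ _ ht hu hv hqbC e1' e2'
  -- limit of the RHS
  have hbt : Tendsto hb (𝓝[≠] (0 : ℂ)) (𝓝 cb) := by
    have := hhb.continuousAt.tendsto.mono_left (nhdsWithin_le_nhds : 𝓝[≠] (0:ℂ) ≤ 𝓝 0)
    rwa [hhb0] at this
  have hdc : ContinuousAt (deriv hb) 0 := by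
    have h1 : ContinuousAt (fun x => fderiv ℂ hb x 1) 0 :=
      ((ContinuousLinearMap.apply ℂ ℂ (1 : ℂ)).continuous.continuousAt).comp
        hhb.fderiv.continuousAt
    have h2 : (deriv hb) = fun x => fderiv ℂ hb x 1 := by
      funext x; exact (fderiv_apply_one_eq_deriv).symm
    rw [h2]; exact h1
  have hderivt : Tendsto (fun t => deriv hb t) (𝓝[≠] (0 : ℂ)) (𝓝 (deriv hb 0)) :=
    hdc.tendsto.mono_left (nhdsWithin_le_nhds : 𝓝[≠] (0:ℂ) ≤ 𝓝 0)
  have htid : Tendsto (fun t : ℂ => t) (𝓝[≠] (0 : ℂ)) (𝓝 0) :=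
    tendsto_id.mono_left (nhdsWithin_le_nhds : 𝓝[≠] (0:ℂ) ≤ 𝓝 0)
  have hRHS : Tendsto (fun t => hb t + (τ t ^ qa / t ^ (qb' + 1) - 1) *
        ((((pb' + 1 : ℕ) : ℂ) * hb t + t * deriv hb t) / ((qb' + 1 : ℕ) : ℂ)))
      (𝓝[≠] (0 : ℂ))
      (𝓝 (cb + (L - 1) * ((((pb' + 1 : ℕ) : ℂ) * cb + 0 * deriv hb 0) / ((qb' + 1 : ℕ) : ℂ)))) :=
    hbt.add ((hL.sub tendsto_const_nhds).mul
      (((tendsto_const_nhds.mul hbt).add (htid.mul hderivt)).div_const _))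
  have hval : cb + (L - 1) * ((((pb' + 1 : ℕ) : ℂ) * cb + 0 * deriv hb 0) / ((qb' + 1 : ℕ) : ℂ))
      = cb * M := by
    have hpbc : ((pb' + 1 : ℕ) : ℂ) = r * ((qb' + 1 : ℕ) : ℂ) := by
      rw [hrb, div_mul_cancel₀ _ hqbC]
    have h2 : ((pb' + 1 : ℕ) : ℂ) * cb + 0 * deriv hb 0 = (r * cb) * ((qb' + 1 : ℕ) : ℂ) := by
      rw [hpbc]; ring
    rw [h2, mul_div_cancel_right₀ _ hqbC, hM]
    ring
  have hF : Tendsto (fun t => wa (τ t) / t ^ (pb' + 1)) (𝓝[≠] (0 : ℂ)) (𝓝 (cb * M)) := by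
    rw [← hval]
    exact hRHS.congr' (hkey.mono fun t h => h.symm)
  -- limit of τ^pa / t^pb
  have haτ : Tendsto (fun t => ha (τ t)) (𝓝[≠] (0 : ℂ)) (𝓝 ca) := by
    have := hha.continuousAt.tendsto.comp hτ
    rwa [hha0] at this
  have hane : ∀ᶠ t in 𝓝[≠] (0 : ℂ), ha (τ t) ≠ 0 := haτ.eventually_ne hca
  have hP : Tendsto (fun t => τ t ^ pa / t ^ (pb' + 1)) (𝓝[≠] (0 : ℂ)) (𝓝 K) := by
    have hq : ∀ᶠ t in 𝓝[≠] (0 : ℂ),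
        wa (τ t) / t ^ (pb' + 1) / ha (τ t) = τ t ^ pa / t ^ (pb' + 1) := by
      filter_upwards [hane] with t h
      rw [hwa, div_right_comm, mul_div_assoc, div_self h, mul_one]
    exact (hF.div haτ hca).congr' hq
  have hKL : K ^ qa = L ^ pa := by
    have hpw : (fun t : ℂ => (τ t ^ pa / t ^ (pb' + 1)) ^ qa)
        = fun t : ℂ => (τ t ^ qa / t ^ (qb' + 1)) ^ pa := by
      funext t
      have hexp : (pb' + 1) * qa = (qb' + 1) * pa := by rw [← hratio]; ring
      rw [div_pow, div_pow, ← pow_mul, ← pow_mul, ← pow_mul, ← pow_mul,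
        mul_comm pa qa, hexp]
    exact tendsto_nhds_unique (hP.pow qa) (by rw [hpw]; exact hL.pow pa)
  have hL0 : L ≠ 0 := by
    intro h
    have hK0 : K = 0 := by
      have : K ^ qa = 0 := by rw [hKL, h, zero_pow (by omega)]
      exact pow_eq_zero_iff (by omega) |>.mp this
    rw [hK] at hK0
    have hM0 : M = 0 := by
      field_simp at hK0
      exact (mul_eq_zero.mp (hK0.trans (mul_zero ca))).resolve_left hcb
    rw [hM, h] at hM0
    apply hr1
    linear_combination -hM0
  have hK0 : K ≠ 0 := by
    intro h
    apply hL0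
    have : L ^ pa = 0 := by rw [← hKL, h, zero_pow (by omega)]
    exact pow_eq_zero_iff (by omega) |>.mp this
  -- gcd business
  set g := Nat.gcd pa qa with hgdef
  have hg : 0 < g := Nat.gcd_pos_of_pos_right _ (by omega)
  set p' := pa / g with hp'def
  set q' := qa / g with hq'def
  have hpa' : pa = g * p' := (Nat.mul_div_cancel' (Nat.gcd_dvd_left _ _)).symm
  have hqa' : qa = g * q' := (Nat.mul_div_cancel' (Nat.gcd_dvd_right _ _)).symm
  have hcop : Nat.Coprime p' q' := Nat.coprime_div_gcd_div_gcd hg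
  have hq'pos : 0 < q' := by
    rcases Nat.eq_zero_or_pos q' with h | h
    · rw [h, Nat.mul_zero] at hqa'; omega
    · exact h
  have hp'pos : 0 < p' := by
    rcases Nat.eq_zero_or_pos p' with h | h
    · rw [h, Nat.mul_zero] at hpa'; omega
    · exact h
  have key : p' * (qb' + 1) = (pb' + 1) * q' := by
    apply Nat.eq_of_mul_eq_mul_left hg
    calc g * (p' * (qb' + 1)) = (g * p') * (qb' + 1) := by ring
    _ = pa * (qb' + 1) := by rw [← hpa']
    _ = (pb' + 1) * qa := hratio
    _ = (pb' + 1) * (g * q') := by rw [← hqa']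
    _ = g * ((pb' + 1) * q') := by ring
  have hq'dvd : q' ∣ qb' + 1 := by
    have h1 : q' ∣ p' * (qb' + 1) := ⟨pb' + 1, by rw [key]; ring⟩
    exact (Nat.Coprime.dvd_of_dvd_mul_left hcop.symm h1)
  set m := (qb' + 1) / q' with hmdef
  have hqb' : qb' + 1 = q' * m := (Nat.mul_div_cancel' hq'dvd).symm
  have hpb' : pb' + 1 = p' * m := by
    apply Nat.eq_of_mul_eq_mul_left hq'pos
    calc q' * (pb' + 1) = (pb' + 1) * q' := by ring
    _ = p' * (qb' + 1) := key.symm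
    _ = p' * (q' * m) := by rw [← hqb']
    _ = q' * (p' * m) := by ring
  set u : ℂ → ℂ := fun t => τ t ^ g / t ^ m with hudef
  have hu_q' : ∀ t, u t ^ q' = τ t ^ qa / t ^ (qb' + 1) := by
    intro t
    rw [hudef]
    simp only
    rw [div_pow, ← pow_mul, ← pow_mul, ← hqa', mul_comm m q', ← hqb']
  have hu_p' : ∀ t, u t ^ p' = τ t ^ pa / t ^ (pb' + 1) := by
    intro t
    rw [hudef]
    simp only
    rw [div_pow, ← pow_mul, ← pow_mul, ← hpa', mul_comm m p', ← hpb']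
  -- Bezout
  have hbez : (1 : ℤ) = (p' : ℤ) * Int.gcdA p' q' + (q' : ℤ) * Int.gcdB p' q' := by
    have h1 := Int.gcd_eq_gcd_ab (p' : ℤ) (q' : ℤ)
    have h2 : Int.gcd (p' : ℤ) (q' : ℤ) = 1 := by
      rw [Int.gcd_natCast_natCast]; exact hcop
    rw [h2] at h1
    exact_mod_cast h1
  set A := Int.gcdA p' q' with hA
  set B := Int.gcdB p' q' with hB
  set lam : ℂ := K ^ A * L ^ B with hlam
  have hDne : ∀ᶠ t in 𝓝[≠] (0 : ℂ), τ t ^ qa / t ^ (qb' + 1) ≠ 0 := hL.eventually_ne hL0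
  have hu_lim : Tendsto u (𝓝[≠] (0 : ℂ)) (𝓝 lam) := by
    have hcA : ContinuousAt (fun z : ℂ => z ^ A) K := continuousAt_zpow₀ K A (Or.inl hK0)
    have hcB : ContinuousAt (fun z : ℂ => z ^ B) L := continuousAt_zpow₀ L B (Or.inl hL0)
    have h1 : Tendsto (fun t => (τ t ^ pa / t ^ (pb' + 1)) ^ A * (τ t ^ qa / t ^ (qb' + 1)) ^ B)
        (𝓝[≠] (0 : ℂ)) (𝓝 lam) := (hcA.tendsto.comp hP).mul (hcB.tendsto.comp hL)
    apply h1.congr'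
    filter_upwards [hDne] with t hD
    have hune : u t ≠ 0 := by
      intro h
      apply hD
      rw [← hu_q' t, h, zero_pow (by omega)]
    rw [← hu_p' t, ← hu_q' t, ← zpow_natCast (u t) p', ← zpow_natCast (u t) q',
      ← zpow_mul, ← zpow_mul, ← zpow_add₀ hune, ← hbez, zpow_one]
  have hlq : lam ^ q' = L :=
    tendsto_nhds_unique (hu_lim.pow q') (hL.congr fun t => (hu_q' t).symm)
  have hlp : lam ^ p' = K :=
    tendsto_nhds_unique (hu_lim.pow p') (hP.congr fun t => (hu_p' t).symm)
  obtain ⟨ζ, hζ⟩ := IsAlgClosed.exists_pow_nat_eq lam hg (k := ℂ)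
  have hζqa : ζ ^ qa = L := by rw [hqa', pow_mul, hζ, hlq]
  have hζpa : ζ ^ pa = K := by rw [hpa', pow_mul, hζ, hlp]
  refine ⟨ζ, ?_, hζqa⟩
  rw [hζpa, hζqa, hK, hM]
  field_simp
  ring
end

section
/- Let p > q ≥ 1 be integers, let r = p/q (viewed as a complex number), and let c ∈ ℂ. Consider the polynomial W(θ) = (r−1)·θ^p − r·θ^{p−q} + c ∈ ℂ[θ], which has degree p since r ≠ 1. Then the sum over the p roots θ_1, …, θ_p of W (counted with multiplicity) of the q-th powers equals Σ_{j=1}^p θ_j^q = p/(r−1) = p·q/(p−q). -/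
open Polynomial

lemma eval_esymm_aux {σ : Type*} [Fintype σ] (f : σ → ℂ) (k : ℕ) :
    MvPolynomial.eval f (MvPolynomial.esymm σ ℂ k) = (Finset.univ.val.map f).esymm k := by
  simp_rw [MvPolynomial.esymm, map_sum, map_prod, MvPolynomial.eval_X,
    Finset.esymm_map_val]


/-- The polynomial `W(θ) = (r-1)θ^p - r θ^{p-q} + c`, with `r = p/q > 1`, has `p` roots
(counted with multiplicity), and the sum of their `q`-th powers equals `p/(r-1)`. -/
theorem sum_of_qth_powers_of_roots
    (p q : ℕ) (hq : 1 ≤ q) (hpq : q < p) (c : ℂ)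
    (r : ℂ) (hr : r = (p : ℂ) / (q : ℂ))
    (W : Polynomial ℂ)
    (hW : W = Polynomial.C (r - 1) * X ^ p - Polynomial.C r * X ^ (p - q)
        + Polynomial.C c) :
    W.roots.card = p ∧ (W.roots.map (fun θ : ℂ => θ ^ q)).sum = (p : ℂ) / (r - 1) := by
  have hq0 : (q : ℂ) ≠ 0 := Nat.cast_ne_zero.mpr (by omega)
  have hqr : (q : ℂ) * r = p := by rw [hr]; field_simp
  have hr1 : r - 1 ≠ 0 := by
    intro h
    have hr' : r = 1 := by linear_combination h
    rw [hr', mul_one] at hqr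
    have : q = p := by exact_mod_cast hqr
    omega
  have hcoeff : ∀ n, W.coeff n = (if n = p then r - 1 else 0)
      - (if n = p - q then r else 0) + (if n = 0 then c else 0) := by
    intro n
    simp only [hW, coeff_add, coeff_sub, coeff_C_mul, coeff_X_pow, coeff_C, mul_ite,
      mul_one, mul_zero]
  have hdeg : W.natDegree = p := by
    rw [hW]
    compute_degree!
    simp only [show ¬ p = p - q by omega, show ¬ p = 0 by omega, if_false]
    simpa using hr1
  have hlead : W.leadingCoeff = r - 1 := by
    rw [Polynomial.leadingCoeff, hdeg, hcoeff]
    have h1 : ¬ (p = p - q) := by omega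
    have h2 : ¬ (p = 0) := by omega
    simp [h1, h2]
  have hsplits : W.Splits := IsAlgClosed.splits W
  have hcard : W.roots.card = p := by
    rw [splits_iff_card_roots.mp hsplits, hdeg]
  refine ⟨hcard, ?_⟩
  -- esymm values
  have hesymm0 : ∀ i, 1 ≤ i → i < q → W.roots.esymm i = 0 := by
    intro i h1 h2
    have hkle : p - i ≤ W.natDegree := by omega
    have hco := Polynomial.coeff_eq_esymm_roots_of_splits hsplits hkle
    rw [hdeg, hcoeff, hlead] at hco
    have hpi : p - (p - i) = i := by omega
    rw [hpi] at hco
    have h1' : ¬ (p - i = p) := by omega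
    have h2' : ¬ (p - i = p - q) := by omega
    have h3' : ¬ (p - i = 0) := by omega
    simp only [h1', h2', h3', if_false] at hco
    have := hco.symm
    have hz : (r - 1) * (-1:ℂ)^i * W.roots.esymm i = 0 := by linear_combination -hco
    rcases mul_eq_zero.mp hz with h | h
    · rcases mul_eq_zero.mp h with h' | h'
      · exact absurd h' hr1
      · exact absurd h' (by simp)
    · exact h
  have hesymmq : (r - 1) * (-1:ℂ)^q * W.roots.esymm q = -r := by
    have hkle : p - q ≤ W.natDegree := by omega
    have hco := Polynomial.coeff_eq_esymm_roots_of_splits hsplits hkle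
    rw [hdeg, hcoeff, hlead] at hco
    have hpi : p - (p - q) = q := by omega
    rw [hpi] at hco
    have h1' : ¬ (p - q = p) := by omega
    have h3' : ¬ (p - q = 0) := by omega
    simp only [h1', h3', if_false, if_pos rfl] at hco
    norm_num at hco
    linear_combination -hco
  -- indexing the roots
  set l := W.roots.toList with hl
  have hlen : l.length = p := by rw [hl, Multiset.length_toList, hcard]
  have huniv : (Finset.univ.val.map l.get : Multiset ℂ) = W.roots := by
    rw [Fin.univ_def]
    show ((List.finRange l.length : Multiset (Fin l.length)).map l.get) = W.roots
    rw [Multiset.map_coe, List.map_get_finRange]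
    exact Multiset.coe_toList _
  have hnewton := congrArg (MvPolynomial.eval l.get)
    (MvPolynomial.psum_eq_mul_esymm_sub_sum (Fin l.length) ℂ q (by omega))
  simp only [MvPolynomial.psum, map_sum, map_pow, MvPolynomial.eval_X, map_sub, map_mul,
    map_ofNat, map_neg, map_one, MvPolynomial.eval_C, eval_esymm_aux, huniv,
    map_natCast] at hnewton
  have hsum0 : ∑ x ∈ Finset.filter (fun a => a.1 ∈ Set.Ioo 0 q) (Finset.HasAntidiagonal.antidiagonal q),
      ((-1:ℂ)) ^ x.1 * W.roots.esymm x.1 * ∑ j : Fin l.length, l.get j ^ x.2 = 0 := by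
    apply Finset.sum_eq_zero
    intro a ha
    simp only [Finset.mem_filter, Set.mem_Ioo] at ha
    rw [hesymm0 a.1 ha.2.1 ha.2.2]
    ring
  rw [hsum0, sub_zero] at hnewton
  have hlhs : (Multiset.map (fun θ : ℂ => θ ^ q) W.roots).sum
      = ∑ i : Fin l.length, l.get i ^ q := by
    rw [← huniv, Multiset.map_map]
    rfl
  rw [hlhs, hnewton, eq_div_iff hr1, pow_succ]
  linear_combination (-(q:ℂ)) * hesymmq + hqr
end

section
/- Let r > 1 be a rational number and let (p_i, q_i, c_i), i = 1, …, N, be a finite family with p_i, q_i positive integers, p_i > q_i, p_i/q_i = r for all i, and c_i ∈ ℂ \ {0}. Let W_i = W_{p_i,q_i,c_i}, let P be the multiset union over i of the q_i-th powers θ^{q_i} of the roots θ of W_i (with multiplicity), let k₁ be the multiplicity of 2 in P, let k₂ be the multiplicity of (r−2)/(r−1) in P, let M be the multiset obtained from P by removing all copies of 2 and of (r−2)/(r−1), and let Π = Σ_{i=1}^N p_i. If M is invariant under the symmetry of ℂ with respect to 1, i.e., the multiset {2 − x : x ∈ M} equals M, then (r−2)·Π = k₂ − k₁·(r−1). -/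
open Polynomial
open scoped Classical

section Aux

open MvPolynomial Finset in
/-- Newton's identity specialized to a multiset of complex numbers whose first `k-1`
elementary symmetric functions vanish. -/
lemma newton_multiset_aux (s : Multiset ℂ) (k : ℕ) (hk : 0 < k)
    (hz : ∀ j, 0 < j → j < k → s.esymm j = 0) :
    (s.map (fun x => x ^ k)).sum = (-1) ^ (k + 1) * (k : ℂ) * s.esymm k := by
  induction s using Quotient.inductionOn with
  | h l =>
    classical
    set n := l.length
    set f : Fin n → ℂ := l.get
    have hrep : (Finset.univ.val.map f : Multiset ℂ) = (l : Multiset ℂ) := by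
      rw [Fin.univ_val_map]
      exact congrArg _ (List.ofFn_get l)
    have hnewton := congrArg (MvPolynomial.aeval f)
      (MvPolynomial.psum_eq_mul_esymm_sub_sum (Fin n) ℂ k hk)
    have hpsum : MvPolynomial.aeval f (MvPolynomial.psum (Fin n) ℂ k)
        = ((l : Multiset ℂ).map (fun x => x ^ k)).sum := by
      rw [MvPolynomial.psum, map_sum, ← hrep, Multiset.map_map]
      simp [Finset.sum]
    have hesymm : ∀ m, MvPolynomial.aeval f (MvPolynomial.esymm (Fin n) ℂ m)
        = (l : Multiset ℂ).esymm m := by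
      intro m
      rw [MvPolynomial.aeval_esymm_eq_multiset_esymm, hrep]
    rw [hpsum, map_sub, map_mul, map_mul, map_pow] at hnewton
    simp only [map_neg, map_one, map_natCast, hesymm, map_sum, map_mul, map_pow] at hnewton
    rw [show ((⟦l⟧ : Multiset ℂ)) = (↑l : Multiset ℂ) from rfl]
    rw [hnewton, Finset.sum_eq_zero, sub_zero]
    intro a ha
    simp only [Finset.mem_filter, Set.mem_Ioo] at ha
    rw [show Multiset.esymm (↑l : Multiset ℂ) a.1 = 0 from hz a.1 ha.2.1 ha.2.2,
      mul_zero, zero_mul]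

/-- The polynomial `(r-1)X^p - rX^{p-q} + c` has exactly `p` roots in `ℂ`. -/
lemma roots_card_aux (p q : ℕ) (hq : 1 ≤ q) (hpq : q < p) (r c : ℂ)
    (hr1 : r - 1 ≠ 0) :
    Multiset.card (C (r - 1) * X ^ p - C r * X ^ (p - q) + C c).roots = p := by
  set W : Polynomial ℂ := C (r - 1) * X ^ p - C r * X ^ (p - q) + C c with hWdef
  have hdeg : W.natDegree = p := by
    rw [hWdef]
    compute_degree!
    rw [if_neg (by omega : ¬ p = p - q), if_neg (by omega : ¬ p = 0)]
    simpa using hr1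
  have hcard : Multiset.card W.roots = W.natDegree :=
    (Polynomial.splits_iff_card_roots).1 (IsAlgClosed.splits W)
  rw [hcard, hdeg]

/-- The sum of the `q`-th powers of the roots of `(r-1)X^p - rX^{p-q} + c`
equals `p/(r-1)`. -/
lemma roots_pow_sum_aux (p q : ℕ) (hq : 1 ≤ q) (hpq : q < p) (r c : ℂ)
    (hr1 : r - 1 ≠ 0) (hqr : (q : ℂ) * r = (p : ℂ)) :
    ((C (r - 1) * X ^ p - C r * X ^ (p - q) + C c).roots.map (fun θ : ℂ => θ ^ q)).sum
      = (p : ℂ) / (r - 1) := by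
  set W : Polynomial ℂ := C (r - 1) * X ^ p - C r * X ^ (p - q) + C c with hWdef
  have hdeg : W.natDegree = p := by
    rw [hWdef]
    compute_degree!
    rw [if_neg (by omega : ¬ p = p - q), if_neg (by omega : ¬ p = 0)]
    simpa using hr1
  have hcard : Multiset.card W.roots = W.natDegree :=
    (Polynomial.splits_iff_card_roots).1 (IsAlgClosed.splits W)
  have hlead : W.leadingCoeff = r - 1 := by
    rw [Polynomial.leadingCoeff, hdeg, hWdef]
    simp only [coeff_add, coeff_sub, coeff_C_mul, coeff_X_pow, coeff_C]
    split_ifs <;> first | ring1 | (exfalso; omega)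
  have hcoeff0 : ∀ j, 0 < j → j < q → W.coeff (p - j) = 0 := by
    intro j hj1 hj2
    rw [hWdef]
    simp only [coeff_add, coeff_sub, coeff_C_mul, coeff_X_pow, coeff_C]
    split_ifs <;> first | ring1 | (exfalso; omega)
  have hcoeffq : W.coeff (p - q) = -r := by
    rw [hWdef]
    simp only [coeff_add, coeff_sub, coeff_C_mul, coeff_X_pow, coeff_C]
    split_ifs <;> first | ring1 | (exfalso; omega)
  have hesymm0 : ∀ j, 0 < j → j < q → W.roots.esymm j = 0 := by
    intro j hj1 hj2
    have := Polynomial.coeff_eq_esymm_roots_of_card hcard (k := p - j) (by omega)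
    rw [hcoeff0 j hj1 hj2, hlead, hdeg, (by omega : p - (p - j) = j)] at this
    have h2 : ((-1 : ℂ)) ^ j ≠ 0 := pow_ne_zero _ (by norm_num)
    field_simp at this
    exact (mul_eq_zero.1 this.symm).resolve_left (mul_ne_zero hr1 h2)
  have hesymmq : W.roots.esymm q = -r / ((r - 1) * (-1) ^ q) := by
    have := Polynomial.coeff_eq_esymm_roots_of_card hcard (k := p - q) (by omega)
    rw [hcoeffq, hlead, hdeg, (by omega : p - (p - q) = q)] at this
    have h2 : ((-1 : ℂ)) ^ q ≠ 0 := pow_ne_zero _ (by norm_num)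
    field_simp [this]
    linear_combination -this
  rw [newton_multiset_aux W.roots q hq hesymm0, hesymmq]
  have h2 : ((-1 : ℂ)) ^ q ≠ 0 := pow_ne_zero _ (by norm_num)
  field_simp
  rw [pow_succ]
  rw [← hqr]
  ring

end Aux

/-- Given a family `W_i(θ) = (r-1)θ^{p_i} - r θ^{p_i-q_i} + c_i` with `p_i/q_i = r > 1`
and `c_i ≠ 0`, let `P` be the multiset of the `q_i`-th powers of the roots of the `W_i`,
`k₁` the multiplicity of `2` in `P`, `k₂` the multiplicity of `(r-2)/(r-1)` in `P`, and
`M` the multiset obtained from `P` by removing all copies of `2` and `(r-2)/(r-1)`.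
If `M` is invariant under the symmetry `x ↦ 2 - x` of `ℂ` with respect to `1`, then
`(r-2)·Π = k₂ - k₁·(r-1)` where `Π = Σ p_i`. -/
theorem symmetric_root_powers_imply_count_relation
    (N : ℕ) (hN : 0 < N) (r : ℚ) (hr : 1 < r)
    (p q : Fin N → ℕ) (c : Fin N → ℂ)
    (hq : ∀ i, 1 ≤ q i) (hpq : ∀ i, q i < p i)
    (hratio : ∀ i, (p i : ℚ) / (q i : ℚ) = r)
    (hc : ∀ i, c i ≠ 0)
    (W : Fin N → Polynomial ℂ)
    (hW : ∀ i, W i = Polynomial.C ((r : ℂ) - 1) * X ^ (p i)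
        - Polynomial.C (r : ℂ) * X ^ (p i - q i) + Polynomial.C (c i))
    (P : Multiset ℂ) (hP : P = ∑ i, ((W i).roots.map (fun θ : ℂ => θ ^ (q i))))
    (k₁ k₂ : ℕ) (hk₁ : k₁ = P.count 2)
    (hk₂ : k₂ = P.count (((r : ℂ) - 2) / ((r : ℂ) - 1)))
    (M : Multiset ℂ)
    (hM : M = P.filter (fun x : ℂ => x ≠ 2 ∧ x ≠ ((r : ℂ) - 2) / ((r : ℂ) - 1)))
    (hsym : M.map (fun x : ℂ => 2 - x) = M)
    (Pi : ℕ) (hPi : Pi = ∑ i, p i) :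
    ((r : ℂ) - 2) * (Pi : ℂ) = (k₂ : ℂ) - (k₁ : ℂ) * ((r : ℂ) - 1) := by
  classical
  set b : ℂ := ((r : ℂ) - 2) / ((r : ℂ) - 1) with hb
  have hr1Q : r - 1 ≠ 0 := by
    intro h; rw [sub_eq_zero] at h; exact absurd h (ne_of_gt hr)
  have hr1C : (r : ℂ) - 1 ≠ 0 := by
    intro h
    rw [sub_eq_zero] at h
    exact hr1Q (by rw [sub_eq_zero]; exact_mod_cast h)
  have hb2 : b ≠ 2 := by
    intro h
    have h1 : ((r : ℂ) - 2) = 2 * ((r : ℂ) - 1) := by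
      rw [← div_mul_cancel₀ ((r : ℂ) - 2) hr1C, ← hb, h]
    have h0 : (r : ℂ) = 0 := by linear_combination -h1
    have : (r : ℚ) = 0 := by exact_mod_cast h0
    linarith
  -- the per-polynomial facts
  have hqr : ∀ i, ((q i : ℂ)) * (r : ℂ) = (p i : ℂ) := by
    intro i
    have hq0 : ((q i : ℚ)) ≠ 0 := by
      have := hq i; positivity
    have : ((q i : ℚ)) * r = (p i : ℚ) := by
      rw [← hratio i]; field_simp
    have h3 := congrArg (fun x : ℚ => (x : ℂ)) this
    push_cast at h3
    exact h3
  have hsum_i : ∀ i, ((W i).roots.map (fun θ : ℂ => θ ^ (q i))).sum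
      = (p i : ℂ) / ((r : ℂ) - 1) := by
    intro i
    rw [hW i]
    exact roots_pow_sum_aux (p i) (q i) (hq i) (hpq i) _ (c i) hr1C (hqr i)
  have hcard_i : ∀ i, Multiset.card ((W i).roots.map (fun θ : ℂ => θ ^ (q i))) = p i := by
    intro i
    rw [Multiset.card_map, hW i]
    exact roots_card_aux (p i) (q i) (hq i) (hpq i) _ (c i) hr1C
  -- sum and card of P
  have hPsum : P.sum = (Pi : ℂ) / ((r : ℂ) - 1) := by
    rw [hP]
    have : (∑ i, ((W i).roots.map (fun θ : ℂ => θ ^ (q i)))).sum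
        = ∑ i, ((W i).roots.map (fun θ : ℂ => θ ^ (q i))).sum := by
      induction (Finset.univ : Finset (Fin N)) using Finset.induction with
      | empty => simp
      | insert _ _ h ih => simp [Finset.sum_insert h, ih]
    rw [this]
    rw [Finset.sum_congr rfl (fun i _ => hsum_i i), ← Finset.sum_div, hPi]
    push_cast
    ring
  have hPcard : Multiset.card P = Pi := by
    rw [hP, hPi]
    have : Multiset.card (∑ i, ((W i).roots.map (fun θ : ℂ => θ ^ (q i))))
        = ∑ i, Multiset.card ((W i).roots.map (fun θ : ℂ => θ ^ (q i))) := by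
      induction (Finset.univ : Finset (Fin N)) using Finset.induction with
      | empty => simp
      | insert _ _ h ih => simp [Finset.sum_insert h, ih]
    rw [this]
    exact Finset.sum_congr rfl (fun i _ => hcard_i i)
  -- decomposition of P
  set B : Multiset ℂ := P.filter (fun x : ℂ => ¬(x ≠ 2 ∧ x ≠ b)) with hBdef
  have hMB : M + B = P := by
    rw [hM, hBdef, hb]
    exact Multiset.filter_add_not _ P
  have hB : B = Multiset.replicate k₁ 2 + Multiset.replicate k₂ b := by
    ext a
    rw [hBdef, Multiset.count_filter, Multiset.count_add,
      Multiset.count_replicate, Multiset.count_replicate]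
    by_cases h2 : a = 2
    · subst h2
      rw [if_pos (by simp), if_pos rfl, if_neg hb2, hk₁]
      simp
    · by_cases hbb : a = b
      · subst hbb
        rw [if_pos (by simp [Ne.symm h2]), if_neg (fun h => h2 h.symm), if_pos rfl, hk₂, hb]
        simp
      · rw [if_neg (by simp [h2, hbb]), if_neg (fun h => h2 h.symm),
          if_neg (fun h => hbb h.symm)]
  -- symmetry gives sum M = card M
  have hMsum : M.sum = (Multiset.card M : ℂ) := by
    have key : ∀ s : Multiset ℂ, (s.map (fun x : ℂ => 2 - x)).sum
        = 2 * (Multiset.card s : ℂ) - s.sum := by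
      intro s
      induction s using Multiset.induction with
      | empty => simp
      | cons a s ih => simp only [Multiset.map_cons, Multiset.sum_cons, ih,
          Multiset.card_cons]; push_cast; ring
    have := congrArg Multiset.sum hsym
    rw [key M] at this
    linear_combination (-(1:ℂ)/2) * this
  -- put everything together
  have hBsum : B.sum = 2 * (k₁ : ℂ) + b * (k₂ : ℂ) := by
    rw [hB]
    simp [Multiset.sum_replicate]
    ring
  have E1 : ((r : ℂ) - 1) * P.sum = (Pi : ℂ) := by
    rw [hPsum]
    field_simp
  have E2' : ((r : ℂ) - 1) * P.sum
      = ((r : ℂ) - 1) * (Multiset.card M : ℂ) + 2 * ((r : ℂ) - 1) * (k₁ : ℂ)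
        + ((r : ℂ) - 2) * (k₂ : ℂ) := by
    rw [← hMB, Multiset.sum_add, hMsum, hBsum, hb]
    field_simp
    ring
  have E4 : (Pi : ℂ) = (Multiset.card M : ℂ) + (k₁ : ℂ) + (k₂ : ℂ) := by
    have : Multiset.card M + (k₁ + k₂) = Pi := by
      rw [← hPcard, ← hMB, Multiset.card_add, hB, Multiset.card_add,
        Multiset.card_replicate, Multiset.card_replicate]
    push_cast [← this]
    ring
  linear_combination E1 - E2' + ((r : ℂ) - 1) * E4
end

section
/- Let r > 1 be a rational number and let (p_i, q_i, c_i), i = 1, …, N, be a finite family with p_i, q_i positive integers, p_i > q_i, p_i/q_i = r for all i, and c_i ∈ ℂ \ {0}. Let W_i = W_{p_i,q_i,c_i}, let P be the multiset union over i of the q_i-th powers θ^{q_i} of the roots θ of W_i (with multiplicity), let k₁ be the multiplicity of 2 in P, let k₂ be the multiplicity of (r−2)/(r−1) in P, and let Π = Σ_{i=1}^N p_i. If (r−2)·Π = k₂ − k₁·(r−1), then r = 2. -/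
open Polynomial
open scoped Classical

lemma aux_count_le (p q : ℕ) (hq : 1 ≤ q) (hpq : q < p) (r : ℚ) (hr : 1 < r)
    (hratio : (p : ℚ) / (q : ℚ) = r) (c : ℂ) (hc : c ≠ 0)
    (W : Polynomial ℂ)
    (hW : W = Polynomial.C ((r : ℂ) - 1) * X ^ p - Polynomial.C (r : ℂ) * X ^ (p - q)
        + Polynomial.C c)
    (v : ℂ) (hv0 : v ≠ 0) (hv1 : v ≠ 1)
    (hA : ((r : ℂ) - 1) * v - (r : ℂ) ≠ 0) :
    ((W.roots.map (fun θ : ℂ => θ ^ q)).count v) ≤ Nat.gcd p q := by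
  have hq0 : (q : ℚ) ≠ 0 := by positivity
  have hpr : (p : ℚ) = r * q := by field_simp at hratio; linarith
  have hprC : (p : ℂ) = (r : ℂ) * (q : ℂ) := by exact_mod_cast hpr
  have hr1 : (r : ℂ) ≠ 1 := by
    have : r ≠ 1 := ne_of_gt hr
    exact_mod_cast fun h => this (by exact_mod_cast h)
  have hr1' : (r : ℂ) - 1 ≠ 0 := sub_ne_zero.mpr hr1
  have hp0 : (p : ℂ) ≠ 0 := by
    have : 0 < p := lt_trans (by omega) hpq
    exact_mod_cast Nat.cast_ne_zero.mpr (by omega)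
  -- W ≠ 0
  have hW0 : W ≠ 0 := by
    intro h
    have hco : W.coeff p = (r : ℂ) - 1 := by
      rw [hW]
      simp only [coeff_add, coeff_sub, coeff_C_mul, coeff_X_pow, coeff_C]
      rw [if_pos trivial, if_neg (by omega : ¬ p = p - q), if_neg (by omega : ¬ p = 0)]
      ring
    rw [h] at hco
    simp at hco
    exact hr1' hco.symm
  -- basic root facts
  set A : ℂ := ((r : ℂ) - 1) * v - (r : ℂ) with hAdef
  set b : ℂ := -c / A with hbdef
  have hb0 : b ≠ 0 := div_ne_zero (neg_ne_zero.mpr hc) hA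
  have key : ∀ θ : ℂ, θ ∈ W.roots → θ ^ q = v →
      θ ≠ 0 ∧ θ ^ (p - q) = b ∧ θ ^ p = b * v := by
    intro θ hmem hpow
    have hθ0 : θ ≠ 0 := by
      intro h; rw [h] at hpow; simp [zero_pow (by omega : q ≠ 0)] at hpow
      exact hv0 hpow.symm
    have hroot : W.eval θ = 0 := (mem_roots hW0).mp hmem
    have heval : ((r : ℂ) - 1) * θ ^ p - (r : ℂ) * θ ^ (p - q) + c = 0 := by
      simpa [hW] using hroot
    have hsplit : θ ^ p = θ ^ (p - q) * v := by
      rw [← hpow, ← pow_add]; congr 1; omega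
    have hAb : A * θ ^ (p - q) = -c := by
      rw [hsplit] at heval; linear_combination heval
    have h1 : θ ^ (p - q) = b := by
      rw [hbdef, eq_div_iff hA, mul_comm]; exact hAb
    exact ⟨hθ0, h1, by rw [hsplit, h1]⟩
  -- simplicity
  have simple : ∀ θ : ℂ, θ ∈ W.roots → θ ^ q = v → W.roots.count θ ≤ 1 := by
    intro θ hmem hpow
    obtain ⟨hθ0, -, -⟩ := key θ hmem hpow
    rw [count_roots]
    by_contra h
    have h2 : 1 < W.rootMultiplicity θ := by omega
    have hder : (Polynomial.derivative W).IsRoot θ := by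
      have := Polynomial.isRoot_iterate_derivative_of_lt_rootMultiplicity h2
      simpa using this
    have hderW : Polynomial.derivative W
        = Polynomial.C ((r : ℂ) - 1) * (Polynomial.C (p : ℂ) * X ^ (p - 1))
          - Polynomial.C (r : ℂ) * (Polynomial.C ((p - q : ℕ) : ℂ) * X ^ (p - q - 1)) := by
      simp only [hW, derivative_add, derivative_sub, derivative_C_mul, derivative_X_pow,
        derivative_C]
      ring
    have heval : ((r : ℂ) - 1) * ((p : ℂ) * θ ^ (p - 1))
        - (r : ℂ) * (((p - q : ℕ) : ℂ) * θ ^ (p - q - 1)) = 0 := by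
      have := hder
      rw [hderW] at this
      simpa [Polynomial.IsRoot] using this
    have hcast : ((p - q : ℕ) : ℂ) = (p : ℂ) - (q : ℂ) := by
      push_cast [Nat.cast_sub (le_of_lt hpq)]; ring
    have hsplit : θ ^ (p - 1) = θ ^ (p - q - 1) * v := by
      rw [← hpow, ← pow_add]; congr 1; omega
    have hfac : θ ^ (p - q - 1) * (((r : ℂ) - 1) * (p : ℂ) * v
        - (r : ℂ) * ((p : ℂ) - (q : ℂ))) = 0 := by
      rw [hcast, hsplit] at heval; linear_combination heval
    have hpow0 : θ ^ (p - q - 1) ≠ 0 := pow_ne_zero _ hθ0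
    have hzero : ((r : ℂ) - 1) * (p : ℂ) * v - (r : ℂ) * ((p : ℂ) - (q : ℂ)) = 0 :=
      (mul_eq_zero.mp hfac).resolve_left hpow0
    have hrpq : (r : ℂ) * ((p : ℂ) - (q : ℂ)) = ((r : ℂ) - 1) * (p : ℂ) := by
      rw [hprC]; ring
    rw [hrpq] at hzero
    have : v = 1 := by
      have h3 : ((r : ℂ) - 1) * (p : ℂ) * (v - 1) = 0 := by linear_combination hzero
      rcases mul_eq_zero.mp h3 with h4 | h4
      · exact absurd (mul_eq_zero.mp h4) (by simp [hr1', hp0])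
      · linear_combination h4
    exact hv1 this
  -- Bezout
  set d : ℕ := Nat.gcd p q with hddef
  have hd1 : 1 ≤ d := by
    have : d ≠ 0 := by simp [hddef, Nat.gcd_eq_zero_iff]; omega
    omega
  have hbez : (d : ℤ) = p * Nat.gcdA p q + q * Nat.gcdB p q := Nat.gcd_eq_gcd_ab p q
  set x : ℤ := Nat.gcdA p q with hxdef
  set y : ℤ := Nat.gcdB p q with hydef
  set w : ℂ := (b * v) ^ x * v ^ y with hwdef
  have hroot_w : ∀ θ : ℂ, θ ∈ W.roots → θ ^ q = v → θ ^ d = w := by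
    intro θ hmem hpow
    obtain ⟨hθ0, h1, h2⟩ := key θ hmem hpow
    rw [← zpow_natCast θ d, hbez, zpow_add₀ hθ0, zpow_mul, zpow_mul,
      zpow_natCast, zpow_natCast, hpow, h2]
  set g : Polynomial ℂ := X ^ d - Polynomial.C w with hgdef
  have hg0 : g ≠ 0 := X_pow_sub_C_ne_zero (by omega) w
  have hcnt : (W.roots.map (fun θ : ℂ => θ ^ q)).count v
      = Multiset.card (W.roots.filter (fun θ => v = θ ^ q)) := Multiset.count_map _ _ _
  rw [hcnt]
  have hle : W.roots.filter (fun θ => v = θ ^ q) ≤ g.roots := by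
    rw [Multiset.le_iff_count]
    intro θ
    by_cases hmem : θ ∈ W.roots.filter (fun θ => v = θ ^ q)
    · rw [Multiset.count_filter]
      obtain ⟨hmemW, hpow⟩ := Multiset.mem_filter.mp hmem
      rw [if_pos hpow]
      have h1 : W.roots.count θ ≤ 1 := simple θ hmemW hpow.symm
      have h2 : 1 ≤ g.roots.count θ := by
        rw [Multiset.one_le_count_iff_mem, mem_roots hg0]
        simp only [hgdef, IsRoot, eval_sub, eval_pow, eval_X, eval_C]
        rw [hroot_w θ hmemW hpow.symm, sub_self]
      omega
    · simp [Multiset.count_eq_zero_of_notMem hmem]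
  calc Multiset.card (W.roots.filter (fun θ => v = θ ^ q))
      ≤ Multiset.card g.roots := Multiset.card_le_card hle
    _ ≤ g.natDegree := Polynomial.card_roots' g
    _ = d := natDegree_X_pow_sub_C

lemma aux_gcd (p q : ℕ) (hq : 1 ≤ q) (hpq : q < p) (r : ℚ) (hr : 1 < r)
    (hratio : (p : ℚ) / (q : ℚ) = r) :
    r.num.toNat * Nat.gcd p q = p := by
  have hq0 : (q : ℚ) ≠ 0 := by positivity
  have hpr : (p : ℚ) = r * q := by field_simp at hratio; linarith
  have hnum : 0 < r.num := Rat.num_pos.mpr (by linarith)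
  set a : ℕ := r.num.toNat with hadef
  have haZ : (a : ℤ) = r.num := Int.toNat_of_nonneg (le_of_lt hnum)
  have hnumQ : ((r.num : ℤ) : ℚ) = r * r.den := by
    have hd : ((r.den : ℕ) : ℚ) ≠ 0 := (Nat.cast_ne_zero (R := ℚ)).mpr r.den_nz
    have h := Rat.num_div_den r
    rw [div_eq_iff hd] at h
    exact_mod_cast h
  have hden : p * r.den = a * q := by
    have hQ : ((p * r.den : ℕ) : ℚ) = ((a * q : ℕ) : ℚ) := by
      push_cast
      rw [hpr, show ((a : ℕ) : ℚ) = ((r.num : ℤ) : ℚ) by exact_mod_cast haZ, hnumQ]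
      ring
    exact_mod_cast hQ
  have hco : Nat.Coprime a r.den := by
    have h1 : r.num.natAbs = a := by
      have : (r.num.natAbs : ℤ) = (a : ℤ) := by rw [haZ, Int.natAbs_of_nonneg (le_of_lt hnum)]
      exact_mod_cast this
    rw [← h1]
    exact r.reduced
  have ha0 : 0 < a := by
    have : (0 : ℤ) < (a : ℤ) := by rw [haZ]; exact hnum
    exact_mod_cast this
  have hdvd : a ∣ p := by
    apply Nat.Coprime.dvd_of_dvd_mul_right hco
    exact ⟨q, hden⟩
  obtain ⟨m, hm⟩ := hdvd
  have hqm : q = r.den * m := by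
    have : a * (m * r.den) = a * q := by rw [← hden, hm]; ring
    have h2 := Nat.eq_of_mul_eq_mul_left ha0 this
    rw [← h2]; ring
  have hgcd : Nat.gcd p q = m := by
    rw [hm, hqm, mul_comm a m, mul_comm r.den m, Nat.gcd_mul_left]
    rw [Nat.Coprime.gcd_eq_one hco, mul_one]
  rw [hgcd, ← hm]

/-- Given a family `W_i(θ) = (r-1)θ^{p_i} - r θ^{p_i-q_i} + c_i` with `p_i/q_i = r > 1`
and `c_i ≠ 0`, let `P` be the multiset of the `q_i`-th powers of the roots of the `W_i`,
`k₁` the multiplicity of `2` in `P`, `k₂` the multiplicity of `(r-2)/(r-1)` in `P`, and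
`Π = Σ p_i`. If `(r-2)·Π = k₂ - k₁·(r-1)`, then `r = 2`. -/
theorem count_relation_implies_r_eq_two
    (N : ℕ) (hN : 0 < N) (r : ℚ) (hr : 1 < r)
    (p q : Fin N → ℕ) (c : Fin N → ℂ)
    (hq : ∀ i, 1 ≤ q i) (hpq : ∀ i, q i < p i)
    (hratio : ∀ i, (p i : ℚ) / (q i : ℚ) = r)
    (hc : ∀ i, c i ≠ 0)
    (W : Fin N → Polynomial ℂ)
    (hW : ∀ i, W i = Polynomial.C ((r : ℂ) - 1) * X ^ (p i)
        - Polynomial.C (r : ℂ) * X ^ (p i - q i) + Polynomial.C (c i))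
    (P : Multiset ℂ) (hP : P = ∑ i, ((W i).roots.map (fun θ : ℂ => θ ^ (q i))))
    (k₁ k₂ : ℕ) (hk₁ : k₁ = P.count 2)
    (hk₂ : k₂ = P.count (((r : ℂ) - 2) / ((r : ℂ) - 1)))
    (Pi : ℕ) (hPi : Pi = ∑ i, p i)
    (hrel : ((r : ℂ) - 2) * (Pi : ℂ) = (k₂ : ℂ) - (k₁ : ℂ) * ((r : ℂ) - 1)) :
    r = 2 := by
  by_contra hr2
  -- basic cast facts
  have hr1C : (r : ℂ) ≠ 1 := by
    have : r ≠ 1 := ne_of_gt hr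
    exact fun h => this (by exact_mod_cast h)
  have hr2C : (r : ℂ) ≠ 2 := by
    exact fun h => hr2 (by exact_mod_cast h)
  have hr1' : (r : ℂ) - 1 ≠ 0 := sub_ne_zero.mpr hr1C
  have hr2' : (r : ℂ) - 2 ≠ 0 := sub_ne_zero.mpr hr2C
  set s : ℂ := ((r : ℂ) - 2) / ((r : ℂ) - 1) with hsdef
  have hs0 : s ≠ 0 := div_ne_zero hr2' hr1'
  have hs1 : s ≠ 1 := by
    intro h
    rw [hsdef, div_eq_one_iff_eq hr1'] at h
    have : (1 : ℂ) = 2 := by linear_combination h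
    norm_num at this
  have hAs : ((r : ℂ) - 1) * s - (r : ℂ) ≠ 0 := by
    have h1 : ((r : ℂ) - 1) * s = (r : ℂ) - 2 := by
      rw [hsdef]; field_simp
    rw [h1]
    intro h
    have : (1 : ℂ) = 0 := by linear_combination -h / 2
    norm_num at this
  have hA2 : ((r : ℂ) - 1) * 2 - (r : ℂ) ≠ 0 := by
    intro h
    exact hr2' (by linear_combination h)
  -- counting bounds
  set a : ℕ := r.num.toNat with hadef
  have hbound : ∀ v : ℂ, v ≠ 0 → v ≠ 1 → (∀ i : Fin N, ((r : ℂ) - 1) * v - (r : ℂ) ≠ 0) →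
      a * P.count v ≤ Pi := by
    intro v hv0 hv1 hA
    have hcount : P.count v = ∑ i, ((W i).roots.map (fun θ : ℂ => θ ^ (q i))).count v := by
      rw [hP, Multiset.count_sum']
    have hstep : ∀ i : Fin N,
        a * ((W i).roots.map (fun θ : ℂ => θ ^ (q i))).count v ≤ p i := by
      intro i
      calc a * ((W i).roots.map (fun θ : ℂ => θ ^ (q i))).count v
          ≤ a * Nat.gcd (p i) (q i) := by
            apply Nat.mul_le_mul_left
            exact aux_count_le (p i) (q i) (hq i) (hpq i) r hr (hratio i) (c i) (hc i)
              (W i) (hW i) v hv0 hv1 (hA i)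
        _ = p i := aux_gcd (p i) (q i) (hq i) (hpq i) r hr (hratio i)
    calc a * P.count v = ∑ i, a * ((W i).roots.map (fun θ : ℂ => θ ^ (q i))).count v := by
          rw [hcount, Finset.mul_sum]
      _ ≤ ∑ i, p i := Finset.sum_le_sum fun i _ => hstep i
      _ = Pi := hPi.symm
  have hk1b : a * k₁ ≤ Pi := by
    rw [hk₁]
    exact hbound 2 (by norm_num) (by norm_num) (fun _ => hA2)
  have hk2b : a * k₂ ≤ Pi := by
    rw [hk₂]
    exact hbound s hs0 hs1 (fun _ => hAs)
  -- rational arithmetic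
  have hrelQ : (r - 2) * (Pi : ℚ) = (k₂ : ℚ) - (k₁ : ℚ) * (r - 1) := by
    exact_mod_cast hrel
  have hnum : 0 < r.num := Rat.num_pos.mpr (by linarith)
  obtain ⟨A, hA_def⟩ : ∃ A : ℚ, A = ((r.num : ℤ) : ℚ) := ⟨_, rfl⟩
  obtain ⟨D, hD_def⟩ : ∃ D : ℚ, D = ((r.den : ℕ) : ℚ) := ⟨_, rfl⟩
  have hA1 : 1 ≤ A := by rw [hA_def]; exact_mod_cast hnum
  have hD1 : 1 ≤ D := by rw [hD_def]; exact_mod_cast r.pos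
  have hAD : A = r * D := by
    rw [hA_def, hD_def]
    have hd : ((r.den : ℕ) : ℚ) ≠ 0 := (Nat.cast_ne_zero (R := ℚ)).mpr r.den_nz
    have h := Rat.num_div_den r
    rw [div_eq_iff hd] at h
    exact_mod_cast h
  have haQ : ((a : ℕ) : ℚ) = A := by
    rw [hA_def]
    have : (a : ℤ) = r.num := Int.toNat_of_nonneg (le_of_lt hnum)
    exact_mod_cast this
  have hPi1 : 1 ≤ (Pi : ℚ) := by
    have : 0 < Pi := by
      rw [hPi]
      have : Nonempty (Fin N) := ⟨⟨0, hN⟩⟩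
      apply Finset.sum_pos (fun i _ => by have := hpq i; omega) Finset.univ_nonempty
    exact_mod_cast this
  have hA0 : (0 : ℚ) ≤ A := by linarith
  have hk1Q : A * (k₁ : ℚ) ≤ (Pi : ℚ) := by
    rw [← haQ]; exact_mod_cast hk1b
  have hk2Q : A * (k₂ : ℚ) ≤ (Pi : ℚ) := by
    rw [← haQ]; exact_mod_cast hk2b
  have hk1nn : (0 : ℚ) ≤ (k₁ : ℚ) := Nat.cast_nonneg _
  have hk2nn : (0 : ℚ) ≤ (k₂ : ℚ) := Nat.cast_nonneg _
  rcases lt_or_gt_of_ne hr2 with hlt | hgt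
  · -- r < 2
    have h1 : A + 1 ≤ 2 * D := by
      have hq1 : A < 2 * D := by
        have := mul_lt_mul_of_pos_right hlt (show (0:ℚ) < D by linarith)
        linarith [hAD]
      rw [hA_def, hD_def] at hq1
      have hz : r.num < 2 * (r.den : ℤ) := by exact_mod_cast hq1
      rw [hA_def, hD_def]
      exact_mod_cast (show r.num + 1 ≤ 2 * (r.den : ℤ) by omega)
    have h2 : (2 - r) * (Pi : ℚ) ≤ (k₁ : ℚ) * (r - 1) := by linarith
    have t1 : A * ((2 - r) * (Pi : ℚ)) ≤ A * ((k₁ : ℚ) * (r - 1)) :=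
      mul_le_mul_of_nonneg_left h2 hA0
    have t2 : (A * (k₁ : ℚ)) * (r - 1) ≤ (Pi : ℚ) * (r - 1) :=
      mul_le_mul_of_nonneg_right hk1Q (by linarith)
    have t3 : (A * (2 - r)) * (Pi : ℚ) ≤ (r - 1) * (Pi : ℚ) := by
      ring_nf at t1 t2 ⊢; linarith
    have h3 : A * (2 - r) ≤ r - 1 := le_of_mul_le_mul_right t3 (by linarith)
    have h5 : A * (2 - r) * D ≤ (r - 1) * D :=
      mul_le_mul_of_nonneg_right h3 (by linarith)
    have h6 : A * (2 * D - A) = A * (2 - r) * D := by linear_combination (-A) * hAD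
    have h7 : A ≤ A * (2 * D - A) := by
      have := mul_le_mul_of_nonneg_left (show (1:ℚ) ≤ 2 * D - A by linarith) hA0
      linarith
    have h8 : (r - 1) * D = A - D := by linear_combination -hAD
    linarith
  · -- r > 2
    have h1 : 2 * D + 1 ≤ A := by
      have hq1 : 2 * D < A := by
        have := mul_lt_mul_of_pos_right hgt (show (0:ℚ) < D by linarith)
        linarith [hAD]
      rw [hA_def, hD_def] at hq1
      have hz : 2 * (r.den : ℤ) < r.num := by exact_mod_cast hq1
      rw [hA_def, hD_def]
      exact_mod_cast (show 2 * (r.den : ℤ) + 1 ≤ r.num by omega)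
    have h2 : (r - 2) * (Pi : ℚ) ≤ (k₂ : ℚ) := by
      linarith [mul_nonneg hk1nn (by linarith : (0:ℚ) ≤ r - 1)]
    have t1 : A * ((r - 2) * (Pi : ℚ)) ≤ A * (k₂ : ℚ) :=
      mul_le_mul_of_nonneg_left h2 hA0
    have t3 : (A * (r - 2)) * (Pi : ℚ) ≤ 1 * (Pi : ℚ) := by
      ring_nf at t1 ⊢; linarith
    have h3 : A * (r - 2) ≤ 1 := le_of_mul_le_mul_right t3 (by linarith)
    have h5 : A * (r - 2) * D ≤ D := by
      have := mul_le_mul_of_nonneg_right h3 (by linarith : (0:ℚ) ≤ D)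
      linarith
    have h6 : A * (A - 2 * D) = A * (r - 2) * D := by linear_combination A * hAD
    have h7 : A ≤ A * (A - 2 * D) := by
      have := mul_le_mul_of_nonneg_left (show (1:ℚ) ≤ A - 2 * D by linarith) hA0
      linarith
    linarith
end

section
/- Let r > 1 be a rational number and let (p_i, q_i, c_i), i = 1, …, N, be a finite family with p_i, q_i positive integers, p_i > q_i, p_i/q_i = r for all i, and c_i ∈ ℂ \ {0}. Let W_i = W_{p_i,q_i,c_i}, let P be the multiset union over i of the q_i-th powers θ^{q_i} of the roots θ of W_i (with multiplicity), and let M be the multiset obtained from P by removing all copies of 2 and of (r−2)/(r−1). If M is invariant under the symmetry of ℂ with respect to 1, i.e., the multiset {2 − x : x ∈ M} equals M, then r = 2. -/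
open Polynomial
open scoped Classical

namespace SymAux


lemma telescope (x : ℂ) (n : ℕ) :
    (∑ k ∈ Finset.range (n+1), C (x^k) * X^(n-k)) * (X - C x)
      = X^(n+1) - C (x^(n+1)) := by
  induction n with
  | zero => simp
  | succ n ih =>
      have h : (∑ k ∈ Finset.range (n+2), C (x^k) * (X:ℂ[X])^(n+1-k))
          = X * (∑ k ∈ Finset.range (n+1), C (x^k) * X^(n-k)) + C (x^(n+1)) := by
        rw [Finset.sum_range_succ, Finset.mul_sum]
        congr 1
        · refine Finset.sum_congr rfl fun k hk => ?_
          have hk' : n + 1 - k = (n - k) + 1 := by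
            have := Finset.mem_range.mp hk; omega
          rw [hk']; ring
        · simp
      rw [h, add_mul, mul_assoc, ih]
      have : (x^(n+2) : ℂ) = x^(n+1) * x := by ring
      rw [show n+1+1 = n+2 from rfl, this, C_mul]
      ring

lemma key (q : ℕ) (s : Multiset ℂ) :
    ((X:ℂ[X])^(q+1) * derivative (s.map (fun a => X - C a)).prod
      - (∑ k ∈ Finset.range (q+1), C ((s.map (fun a => a^k)).sum) * X^(q-k))
        * (s.map (fun a => X - C a)).prod).degree < ((Multiset.card s : ℕ) : WithBot ℕ) := by
  induction s using Multiset.induction_on with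
  | empty =>
      simp only [Multiset.map_zero, Multiset.prod_zero, derivative_one, mul_zero,
        Multiset.sum_zero, map_zero, zero_mul, Finset.sum_const_zero, sub_zero,
        Multiset.card_zero, Nat.cast_zero, degree_zero]
      exact WithBot.bot_lt_coe 0
  | cons a s ih =>
      set h : ℂ[X] := (s.map (fun a => X - C a)).prod with hh
      have hmon : h.Monic := monic_multiset_prod_of_monic _ _ fun b _ => monic_X_sub_C b
      have hdeg : h.degree = (Multiset.card s : ℕ) := by
        rw [degree_eq_natDegree hmon.ne_zero]
        norm_cast
        exact natDegree_multiset_prod_X_sub_C_eq_card s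
      have hu := telescope a q
      have hexp :
          ((X:ℂ[X])^(q+1) * derivative ((a ::ₘ s).map (fun a => X - C a)).prod
            - (∑ k ∈ Finset.range (q+1), C (((a ::ₘ s).map (fun a => a^k)).sum) * X^(q-k))
              * ((a ::ₘ s).map (fun a => X - C a)).prod)
          = (X - C a) * ((X:ℂ[X])^(q+1) * derivative h
              - (∑ k ∈ Finset.range (q+1), C ((s.map (fun a => a^k)).sum) * X^(q-k)) * h)
            + C (a^(q+1)) * h := by
        rw [Multiset.map_cons, Multiset.prod_cons, derivative_mul]
        simp only [derivative_sub, derivative_X, derivative_C, sub_zero, one_mul]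
        have hsum : ∀ k : ℕ, (((a ::ₘ s).map (fun a => a^k)).sum) = a^k + (s.map (fun a => a^k)).sum := by
          intro k; simp
        simp only [hsum, C_add, add_mul, Finset.sum_add_distrib]
        linear_combination (-(h : ℂ[X])) * hu
      rw [hexp]
      have h1 : ((X - C a) * ((X:ℂ[X])^(q+1) * derivative h
          - (∑ k ∈ Finset.range (q+1), C ((s.map (fun a => a^k)).sum) * X^(q-k)) * h)).degree
          < ((Multiset.card s + 1 : ℕ) : WithBot ℕ) := by
        rw [degree_mul, degree_X_sub_C]
        calc 1 + (_ : ℂ[X]).degree < 1 + (Multiset.card s : ℕ) := by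
              exact WithBot.add_lt_add_left (by simp) ih
          _ = ((Multiset.card s + 1 : ℕ) : WithBot ℕ) := by
              push_cast; rw [add_comm]
      have h2 : (C (a^(q+1)) * h).degree < ((Multiset.card s + 1 : ℕ) : WithBot ℕ) := by
        have hle : (C (a^(q+1)) * h).degree ≤ h.degree :=
          calc (C (a^(q+1)) * h).degree ≤ (C (a^(q+1))).degree + h.degree := degree_mul_le _ _
            _ ≤ 0 + h.degree := add_le_add degree_C_le le_rfl
            _ = h.degree := zero_add _
        refine lt_of_le_of_lt hle ?_
        rw [hdeg]
        exact_mod_cast Nat.lt_succ_self _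
      calc _ ≤ max _ _ := degree_add_le _ _
        _ < ((Multiset.card s + 1 : ℕ) : WithBot ℕ) := max_lt h1 h2
        _ = ((Multiset.card (a ::ₘ s) : ℕ) : WithBot ℕ) := by rw [Multiset.card_cons]




section Tri
variable (A B c : ℂ) (p q : ℕ)

lemma coeff_tri (n : ℕ) :
    (C A * X^p + C B * X^(p-q) + C c).coeff n
      = (if n = p then A else 0) + (if n = p - q then B else 0) + (if n = 0 then c else 0) := by
  simp [coeff_add, coeff_C_mul, coeff_X_pow, coeff_C, eq_comm]

variable {A} (hA : A ≠ 0) (hq : 1 ≤ q) (hqp : q < p)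
include hA hq hqp

lemma natDegree_tri : (C A * X^p + C B * X^(p-q) + C c).natDegree = p := by
  have h1 : p - q < p := by omega
  have h0 : 0 < p := by omega
  compute_degree!
  have e1 : ¬ (p = p - q) := by omega
  have e2 : ¬ (p = 0) := by omega
  simp [e1, e2]
  exact hA

lemma coeff_tri_top : (C A * X^p + C B * X^(p-q) + C c).coeff p = A := by
  rw [coeff_tri]
  have h1 : ¬ (p = p - q) := by omega
  have h2 : ¬ (p = 0) := by omega
  simp [h1, h2]

lemma tri_ne_zero : (C A * X^p + C B * X^(p-q) + C c) ≠ 0 := fun h => by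
  have := coeff_tri_top B c p q hA hq hqp
  rw [h] at this; simp at this; exact hA this.symm

lemma card_roots_tri : Multiset.card (C A * X^p + C B * X^(p-q) + C c).roots = p := by
  have hs : Splits (C A * X^p + C B * X^(p-q) + C c) :=
    IsAlgClosed.splits _
  have := hs.natDegree_eq_card_roots
  rw [← this, natDegree_tri B c p q hA hq hqp]

lemma sum_pow_roots :
    (((C A * X^p + C B * X^(p-q) + C c).roots.map (fun z => z^q)).sum) * A = -(q:ℂ) * B := by
  set f : ℂ[X] := C A * X^p + C B * X^(p-q) + C c with hf
  have hs : Splits f := IsAlgClosed.splits _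
  have hcard : Multiset.card f.roots = p := card_roots_tri B c p q hA hq hqp
  have hlc : f.leadingCoeff = A := by
    rw [leadingCoeff, natDegree_tri B c p q hA hq hqp]
    exact coeff_tri_top B c p q hA hq hqp
  have hfac : f = C A * (f.roots.map (fun a => X - C a)).prod := by
    conv_lhs => rw [hs.eq_prod_roots]
    rw [hlc]
  -- the main identity multiplied by C A
  set h : ℂ[X] := (f.roots.map (fun a => X - C a)).prod with hh
  set U : ℂ[X] := ∑ k ∈ Finset.range (q+1), C ((f.roots.map (fun a => a^k)).sum) * X^(q-k) with hU
  set D : ℂ[X] := (X:ℂ[X])^(q+1) * derivative h - U * h with hD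
  have hDdeg : D.degree < (p : WithBot ℕ) := by
    have := key q f.roots
    rw [hcard] at this
    exact this
  have hmain : (X:ℂ[X])^(q+1) * derivative f - U * f = C A * D := by
    rw [hfac, derivative_C_mul, hD]
    ring
  -- coefficient of X^p on both sides
  have hRHS : (C A * D).coeff p = 0 := by
    have : (C A * D).degree < (p : WithBot ℕ) := by
      have hle : (C A * D).degree ≤ D.degree :=
        calc (C A * D).degree ≤ (C A).degree + D.degree := degree_mul_le _ _
          _ ≤ 0 + D.degree := add_le_add degree_C_le le_rfl
          _ = D.degree := zero_add _
      exact lt_of_le_of_lt hle hDdeg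
    exact coeff_eq_zero_of_degree_lt this
  -- derivative of f
  have hderiv : derivative f = C (A*((p:ℕ):ℂ)) * X^(p-1) + C (B*(((p-q:ℕ)):ℂ)) * X^(p-q-1) := by
    rw [hf]
    simp only [derivative_add, derivative_C, derivative_C_mul_X_pow, add_zero]
  have hc1 : ((X:ℂ[X])^(q+1) * derivative f).coeff p = B*(((p-q:ℕ)):ℂ) := by
    rw [coeff_X_pow_mul', if_pos (by omega : q+1 ≤ p), hderiv]
    rw [coeff_add, coeff_C_mul, coeff_C_mul, coeff_X_pow, coeff_X_pow]
    have e1 : ¬ (p - (q+1) = p - 1) := by omega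
    have e2 : (p - (q+1) = p - q - 1) := by omega
    have e3 : ¬ (p - q - 1 = p - 1) := by omega
    simp [e1, e2, e3]
  have hc2 : (U * f).coeff p = (p:ℂ) * B + ((f.roots.map (fun z => z^q)).sum) * A := by
    rw [hU, Finset.sum_mul, finset_sum_coeff]
    have hterm : ∀ k ∈ Finset.range (q+1),
        ((C ((f.roots.map (fun a => a^k)).sum) * X^(q-k)) * f).coeff p
          = ((f.roots.map (fun a => a^k)).sum) * f.coeff (p - (q-k)) := by
      intro k hk
      have hk' : k ≤ q := by have := Finset.mem_range.mp hk; omega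
      rw [mul_assoc, coeff_C_mul]
      congr 1
      rw [coeff_X_pow_mul', if_pos (by omega : q - k ≤ p)]
    rw [Finset.sum_congr rfl hterm, Finset.sum_range_succ]
    have hlast : (f.roots.map (fun a => a^q)).sum * f.coeff (p - (q-q)) =
        ((f.roots.map (fun z => z^q)).sum) * A := by
      have : p - (q - q) = p := by omega
      rw [this]
      have : f.coeff p = A := coeff_tri_top B c p q hA hq hqp
      rw [this]
    rw [hlast]
    congr 1
    -- the sum over k < q reduces to the k = 0 term
    have h0q : 0 ∈ Finset.range q := Finset.mem_range.mpr (by omega)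
    rw [Finset.sum_eq_single_of_mem 0 h0q ?_]
    · have : p - (q - 0) = p - q := by omega
      rw [this]
      have hc : f.coeff (p-q) = B := by
        rw [hf, coeff_tri]
        have e1 : ¬ (p - q = p) := by omega
        have e2 : ¬ (p - q = 0) := by omega
        simp [e1, e2]
      rw [hc]
      simp [hcard]
    · intro k hk hk0
      have hkq : k < q := Finset.mem_range.mp hk
      have hz : f.coeff (p - (q-k)) = 0 := by
        rw [hf, coeff_tri]
        have e1 : ¬ (p - (q-k) = p) := by omega
        have e2 : ¬ (p - (q-k) = p - q) := by omega
        have e3 : ¬ (p - (q-k) = 0) := by omega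
        simp [e1, e2, e3]
      rw [hz, mul_zero]
  have hkey := congrArg (fun g : ℂ[X] => g.coeff p) hmain
  simp only [coeff_sub] at hkey
  rw [hc1, hc2, hRHS] at hkey
  have hpq : (((p-q : ℕ)) : ℂ) = (p:ℂ) - (q:ℂ) := by
    push_cast [Nat.cast_sub (le_of_lt hqp)]; ring
  linear_combination -hkey + B * hpq

end Tri


lemma count_pow_roots_le (A B c v : ℂ) (p q : ℕ) (hA : A ≠ 0) (hc : c ≠ 0)
    (hq : 1 ≤ q) (hqp : q < p)
    (hv0 : v ≠ 0) (hv1 : A * v + B ≠ 0)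
    (hcrit : (p:ℂ) * A * v + ((p-q:ℕ):ℂ) * B ≠ 0) :
    ((C A * X^p + C B * X^(p-q) + C c).roots.map (fun z => z^q)).count v
      ≤ Nat.gcd q (p - q) := by
  set f : ℂ[X] := C A * X^p + C B * X^(p-q) + C c with hf
  have hfne : f ≠ 0 := by
    intro h0
    have := congrArg (fun g : ℂ[X] => g.coeff p) h0
    simp only [hf, coeff_add, coeff_C_mul, coeff_X_pow, coeff_C, coeff_zero] at this
    have e1 : ¬ (p = p - q) := by omega
    have e2 : ¬ (p = 0) := by omega
    simp [e1, e2] at this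
    exact hA this
  rw [Multiset.count_map]
  set F : Multiset ℂ := f.roots.filter (fun a => v = a^q) with hF
  -- basic facts about elements of F
  have hmemF : ∀ θ ∈ F, θ ≠ 0 ∧ θ^q = v ∧ θ^(p-q) = -c / (A*v + B) := by
    intro θ hθ
    obtain ⟨hroot, hpow⟩ := Multiset.mem_filter.mp hθ
    have hpow' : θ^q = v := hpow.symm
    have hθ0 : θ ≠ 0 := by
      intro h0; rw [h0] at hpow'
      rw [zero_pow (by omega : q ≠ 0)] at hpow'
      exact hv0 hpow'.symm
    have heval : A * θ^p + B * θ^(p-q) + c = 0 := by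
      have h2 : f.eval θ = 0 := (mem_roots hfne).mp hroot
      simpa [hf] using h2
    have hsplit : θ^p = θ^(p-q) * v := by
      rw [← hpow', ← pow_add]
      congr 1
      omega
    have : θ^(p-q) * (A*v + B) = -c := by
      rw [hsplit] at heval
      ring_nf
      ring_nf at heval
      linear_combination heval
    refine ⟨hθ0, hpow', ?_⟩
    field_simp
    linear_combination this
  -- every element of F is a root of X^d - C z
  set d : ℕ := Nat.gcd q (p-q) with hd
  have hdpos : 0 < d := Nat.gcd_pos_of_pos_left _ (by omega)
  set y : ℂ := -c / (A*v + B) with hy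
  have hy0 : y ≠ 0 := by
    rw [hy]
    exact div_ne_zero (neg_ne_zero.mpr hc) hv1
  set z : ℂ := v ^ (Nat.gcdA q (p-q)) * y ^ (Nat.gcdB q (p-q)) with hz
  have hroot' : ∀ θ ∈ F, θ^d = z := by
    intro θ hθ
    obtain ⟨hθ0, hqv, hpy⟩ := hmemF θ hθ
    have key : (θ:ℂ)^(d:ℤ) = z := by
      have hbez : (d : ℤ) = (q:ℤ) * Nat.gcdA q (p-q) + ((p-q : ℕ) : ℤ) * Nat.gcdB q (p-q) :=
        Nat.gcd_eq_gcd_ab q (p-q)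
      rw [hbez, zpow_add₀ hθ0, zpow_mul, zpow_mul]
      rw [zpow_natCast, zpow_natCast, hqv, hpy, hz, hy]
    rw [← zpow_natCast θ d]
    exact key
  -- every element of F is a simple root of f
  have hcount1 : ∀ θ : ℂ, F.count θ ≤ 1 := by
    intro θ
    by_cases hθ : θ ∈ F
    · obtain ⟨hθ0, hqv, hpy⟩ := hmemF θ hθ
      have h1 : F.count θ ≤ f.roots.count θ :=
        Multiset.count_le_of_le θ (Multiset.filter_le _ _)
      rw [count_roots] at h1
      refine h1.trans ?_
      by_contra hgt
      push_neg at hgt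
      have h2 : 1 < rootMultiplicity θ f := hgt
      have h3 := (one_lt_rootMultiplicity_iff_isRoot hfne).mp h2
      have hder : (derivative f).eval θ = 0 := h3.2
      have hderiv : derivative f = C (A*((p:ℕ):ℂ)) * X^(p-1) + C (B*(((p-q:ℕ)):ℂ)) * X^(p-q-1) := by
        rw [hf]
        simp only [derivative_add, derivative_C, derivative_C_mul_X_pow, add_zero]
      rw [hderiv] at hder
      simp only [eval_add, eval_mul, eval_pow, eval_C, eval_X] at hder
      have hsplit : θ^(p-1) = θ^(p-q-1) * v := by
        rw [← hqv, ← pow_add]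
        congr 1
        omega
      rw [hsplit] at hder
      have : θ^(p-q-1) * ((p:ℂ) * A * v + ((p-q:ℕ):ℂ) * B) = 0 := by linear_combination hder
      rcases mul_eq_zero.mp this with h | h
      · exact pow_ne_zero _ hθ0 h
      · exact hcrit h
    · rw [Multiset.count_eq_zero_of_notMem hθ]; omega
  have hnodup : F.Nodup := Multiset.nodup_iff_count_le_one.mpr hcount1
  have hle : F ≤ (X^d - C z).roots := by
    rw [Multiset.le_iff_count]
    intro θ
    by_cases hθ : θ ∈ F
    · refine (hcount1 θ).trans ?_
      rw [count_roots]
      have hne : (X:ℂ[X])^d - C z ≠ 0 := X_pow_sub_C_ne_zero hdpos z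
      have : IsRoot (X^d - C z) θ := by
        simp [IsRoot, hroot' θ hθ]
      exact (rootMultiplicity_pos hne).mpr this
    · rw [Multiset.count_eq_zero_of_notMem hθ]; omega
  calc Multiset.card F ≤ Multiset.card ((X^d - C z).roots) := Multiset.card_le_card hle
    _ ≤ (X^d - C z).natDegree := card_roots' _
    _ = d := natDegree_X_pow_sub_C




lemma msum_sum {ι : Type*} (s : Finset ι) (f : ι → Multiset ℂ) :
    (∑ i ∈ s, f i).sum = ∑ i ∈ s, (f i).sum := by
  classical
  induction s using Finset.induction_on with
  | empty => simp
  | insert _ _ h ih => rw [Finset.sum_insert h, Finset.sum_insert h, Multiset.sum_add, ih]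

lemma mcard_sum {ι : Type*} (s : Finset ι) (f : ι → Multiset ℂ) :
    Multiset.card (∑ i ∈ s, f i) = ∑ i ∈ s, Multiset.card (f i) :=
  map_sum (⟨⟨Multiset.card, Multiset.card_zero⟩, Multiset.card_add⟩ : Multiset ℂ →+ ℕ) f s

lemma mcount_sum {ι : Type*} (s : Finset ι) (f : ι → Multiset ℂ) (a : ℂ) :
    (∑ i ∈ s, f i).count a = ∑ i ∈ s, (f i).count a := by
  classical
  induction s using Finset.induction_on with
  | empty => simp
  | insert _ _ h ih => rw [Finset.sum_insert h, Finset.sum_insert h, Multiset.count_add, ih]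

lemma sum_map_two_sub (M : Multiset ℂ) :
    (M.map (fun x => (2:ℂ) - x)).sum = 2 * (Multiset.card M : ℂ) - M.sum := by
  induction M using Multiset.induction_on with
  | empty => simp
  | cons a s ih =>
      simp only [Multiset.map_cons, Multiset.sum_cons, Multiset.card_cons, ih]
      push_cast
      ring


end SymAux

open SymAux

set_option maxHeartbeats 1000000 in
/-- Given a family `W_i(θ) = (r-1)θ^{p_i} - r θ^{p_i-q_i} + c_i` with `p_i/q_i = r > 1`
and `c_i ≠ 0`, let `P` be the multiset of the `q_i`-th powers of the roots of the `W_i`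
and `M` the multiset obtained from `P` by removing all copies of `2` and `(r-2)/(r-1)`.
If `M` is invariant under the symmetry `x ↦ 2 - x` of `ℂ` with respect to `1`,
then `r = 2`. -/
theorem symmetric_root_powers_imply_r_eq_two
    (N : ℕ) (hN : 0 < N) (r : ℚ) (hr : 1 < r)
    (p q : Fin N → ℕ) (c : Fin N → ℂ)
    (hq : ∀ i, 1 ≤ q i) (hpq : ∀ i, q i < p i)
    (hratio : ∀ i, (p i : ℚ) / (q i : ℚ) = r)
    (hc : ∀ i, c i ≠ 0)
    (W : Fin N → Polynomial ℂ)
    (hW : ∀ i, W i = Polynomial.C ((r : ℂ) - 1) * X ^ (p i)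
        - Polynomial.C (r : ℂ) * X ^ (p i - q i) + Polynomial.C (c i))
    (P : Multiset ℂ) (hP : P = ∑ i, ((W i).roots.map (fun θ : ℂ => θ ^ (q i))))
    (M : Multiset ℂ)
    (hM : M = P.filter (fun x : ℂ => x ≠ 2 ∧ x ≠ ((r : ℂ) - 2) / ((r : ℂ) - 1)))
    (hsym : M.map (fun x : ℂ => 2 - x) = M) :
    r = 2 := by
  by_contra hr2
  -- basic scalar facts
  have hrQ0 : (0:ℚ) < r := by linarith
  have hr1C : (r:ℂ) - 1 ≠ 0 := by
    have : (r:ℚ) - 1 ≠ 0 := by intro h; apply absurd hr; simp [show r = 1 by linarith]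
    exact_mod_cast (by exact_mod_cast this : ((r:ℚ) - 1 : ℂ) ≠ 0)
  have hr2C : (r:ℂ) - 2 ≠ 0 := by
    have h2 : (r:ℚ) - 2 ≠ 0 := sub_ne_zero.mpr hr2
    exact_mod_cast (by exact_mod_cast h2 : ((r:ℚ) - 2 : ℂ) ≠ 0)
  have hr0C : (r:ℂ) ≠ 0 := by
    have : (r:ℚ) ≠ 0 := ne_of_gt hrQ0
    exact_mod_cast this
  set α : ℂ := ((r : ℂ) - 2) / ((r : ℂ) - 1) with hα
  have hα0 : α ≠ 0 := div_ne_zero hr2C hr1C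
  have hα2 : α ≠ 2 := by
    intro h
    rw [hα, div_eq_iff hr1C] at h
    exact hr0C (by linear_combination -h)
  have hα1 : α - 1 ≠ 0 := by
    intro h
    have hα1' : α = 1 := by linear_combination h
    rw [hα, div_eq_iff hr1C] at hα1'
    have h21 : (2:ℂ) = 1 := by linear_combination -hα1'
    norm_num at h21
  have hαr : α * ((r:ℂ) - 1) = (r:ℂ) - 2 := div_mul_cancel₀ _ hr1C
  -- the trinomial shape of W i
  have hWi : ∀ i, W i = C ((r:ℂ)-1) * X^(p i) + C (-(r:ℂ)) * X^(p i - q i) + C (c i) := by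
    intro i
    rw [hW i, map_neg]
    ring
  -- arithmetic: a, b, t i
  set a : ℕ := r.num.natAbs with ha
  set b : ℕ := r.den with hb
  have hnum : (0:ℤ) < r.num := Rat.num_pos.mpr hrQ0
  have haZ : (a:ℤ) = r.num := Int.natAbs_of_nonneg (le_of_lt hnum)
  have hbpos : 0 < b := r.pos
  have hbQ : ((b:ℚ)) ≠ 0 := Nat.cast_ne_zero.mpr hbpos.ne'
  have haQ : (a:ℚ) = r * b := by
    have h0 := Rat.num_div_den r
    rw [div_eq_iff (by exact_mod_cast hbQ)] at h0
    have h2 : ((a:ℚ)) = ((r.num : ℤ) : ℚ) := by exact_mod_cast haZ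
    rw [h2, h0]
  have hcop : Nat.Coprime a b := r.reduced
  have hab : b < a := by
    have hb1 : (1:ℚ) ≤ b := by exact_mod_cast hbpos
    have : (b:ℚ) < (a:ℚ) := by rw [haQ]; nlinarith
    exact_mod_cast this
  -- per index arithmetic
  have hpbaq : ∀ i, p i * b = a * q i := by
    intro i
    have hqne : ((q i : ℚ)) ≠ 0 := Nat.cast_ne_zero.mpr (by have := hq i; omega)
    have h1 : (p i : ℚ) = r * q i := by
      rw [← hratio i]; field_simp
    have : ((p i * b : ℕ) : ℚ) = ((a * q i : ℕ) : ℚ) := by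
      push_cast
      rw [h1, haQ]; ring
    exact_mod_cast this
  set t : Fin N → ℕ := fun i => q i / b with ht
  have hqt : ∀ i, q i = b * t i := by
    intro i
    have hdvd : b ∣ q i := (Nat.Coprime.dvd_of_dvd_mul_left hcop.symm ⟨p i, by rw [← hpbaq i, Nat.mul_comm]⟩)
    rw [ht]
    exact (Nat.mul_div_cancel' hdvd).symm
  have hpt : ∀ i, p i = a * t i := by
    intro i
    have h1 : p i * b = a * (b * t i) := by rw [← hqt i]; exact hpbaq i
    have : p i * b = (a * t i) * b := by rw [h1]; ring
    exact Nat.eq_of_mul_eq_mul_right hbpos this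
  have ht1 : ∀ i, 1 ≤ t i := by
    intro i
    by_contra h
    have ht0 : t i = 0 := by omega
    have h1 := hqt i
    rw [ht0, Nat.mul_zero] at h1
    have := hq i
    omega
  clear_value t
  have hcop2 : Nat.gcd b (a - b) = 1 := by
    have hdvd : Nat.gcd b (a - b) ∣ a := by
      have h2 : Nat.gcd b (a - b) ∣ (a - b) := Nat.gcd_dvd_right _ _
      have h3 : Nat.gcd b (a - b) ∣ b := Nat.gcd_dvd_left _ _
      have h4 : Nat.gcd b (a - b) ∣ a - b + b := Nat.dvd_add h2 h3
      rwa [Nat.sub_add_cancel (le_of_lt hab)] at h4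
    have h5 : Nat.gcd b (a - b) ∣ Nat.gcd a b :=
      Nat.dvd_gcd hdvd (Nat.gcd_dvd_left _ _)
    rw [hcop] at h5
    exact Nat.dvd_one.mp h5
  have hgcd : ∀ i, Nat.gcd (q i) (p i - q i) = t i := by
    intro i
    have h1 : p i - q i = (a - b) * t i := by
      rw [hpt i, hqt i, Nat.sub_mul]
    rw [h1, hqt i, Nat.gcd_mul_right, hcop2, one_mul]
  -- global quantities
  set Q : ℕ := ∑ i, q i with hQ
  set Pc : ℕ := ∑ i, p i with hPc
  set D : ℕ := ∑ i, t i with hD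
  have hQbD : Q = b * D := by
    rw [hQ, hD, Finset.mul_sum]
    exact Finset.sum_congr rfl fun i _ => hqt i
  have hPaD : Pc = a * D := by
    rw [hPc, hD, Finset.mul_sum]
    exact Finset.sum_congr rfl fun i _ => hpt i
  have hD1 : 1 ≤ D := by
    have : Nonempty (Fin N) := ⟨⟨0, hN⟩⟩
    obtain ⟨i⟩ := this
    calc 1 ≤ t i := ht1 i
      _ ≤ D := Finset.single_le_sum (fun j _ => Nat.zero_le (t j)) (Finset.mem_univ i)
  -- per index analytic facts
  have hkeyC : ∀ i, (p i : ℂ) * ((r:ℂ) - 1) = ((p i - q i : ℕ):ℂ) * (r:ℂ) := by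
    intro i
    have hqne : ((q i : ℚ)) ≠ 0 := Nat.cast_ne_zero.mpr (by have := hq i; omega)
    have h1 : (p i : ℚ) = r * q i := by rw [← hratio i]; field_simp
    have h2 : (p i : ℚ) * (r - 1) = ((p i - q i : ℕ):ℚ) * r := by
      rw [Nat.cast_sub (le_of_lt (hpq i))]
      linear_combination -h1
    exact_mod_cast h2
  have hpqC : ∀ i, ((p i - q i : ℕ):ℂ) ≠ 0 := fun i =>
    Nat.cast_ne_zero.mpr (by have := hpq i; omega)
  have hsum_i : ∀ i, (((W i).roots.map (fun θ : ℂ => θ ^ (q i))).sum) * ((r:ℂ)-1)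
      = (q i : ℂ) * (r:ℂ) := by
    intro i
    rw [hWi i]
    rw [sum_pow_roots (A := ((r:ℂ)-1)) (-(r:ℂ)) (c i) (p i) (q i) hr1C (hq i) (hpq i)]
    ring
  have hcard_i : ∀ i, Multiset.card ((W i).roots) = p i := by
    intro i
    rw [hWi i]
    exact card_roots_tri (-(r:ℂ)) (c i) (p i) (q i) hr1C (hq i) (hpq i)
  have hcount2_i : ∀ i, ((W i).roots.map (fun θ : ℂ => θ ^ (q i))).count 2 ≤ t i := by
    intro i
    rw [hWi i, ← hgcd i]
    apply count_pow_roots_le _ _ _ _ _ _ hr1C (hc i) (hq i) (hpq i)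
    · norm_num
    · have : ((r:ℂ)-1) * 2 + (-(r:ℂ)) = (r:ℂ) - 2 := by ring
      rw [this]; exact hr2C
    · have h1 : (p i:ℂ) * (((r:ℂ)-1)) * 2 + ((p i - q i : ℕ):ℂ) * (-(r:ℂ))
          = ((p i - q i : ℕ):ℂ) * (r:ℂ) := by
        linear_combination 2 * hkeyC i
      rw [h1]
      exact mul_ne_zero (hpqC i) hr0C
  have hcountα_i : ∀ i, ((W i).roots.map (fun θ : ℂ => θ ^ (q i))).count α ≤ t i := by
    intro i
    rw [hWi i, ← hgcd i]
    apply count_pow_roots_le _ _ _ _ _ _ hr1C (hc i) (hq i) (hpq i)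
    · exact hα0
    · have : ((r:ℂ)-1) * α + (-(r:ℂ)) = -2 := by
        rw [show ((r:ℂ)-1) * α = α * ((r:ℂ)-1) from mul_comm _ _, hαr]; ring
      rw [this]; norm_num
    · have h1 : (p i:ℂ) * (((r:ℂ)-1)) * α + ((p i - q i : ℕ):ℂ) * (-(r:ℂ))
          = ((p i - q i : ℕ):ℂ) * (r:ℂ) * (α - 1) := by
        linear_combination α * hkeyC i
      rw [h1]
      exact mul_ne_zero (mul_ne_zero (hpqC i) hr0C) hα1
  -- multiset bookkeeping
  set m2 : ℕ := P.count 2 with hm2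
  set ma : ℕ := P.count α with hma
  have hm2D : m2 ≤ D := by
    rw [hm2, hP, mcount_sum, hD]
    exact Finset.sum_le_sum fun i _ => hcount2_i i
  have hmaD : ma ≤ D := by
    rw [hma, hP, mcount_sum, hD]
    exact Finset.sum_le_sum fun i _ => hcountα_i i
  have hPsum : P.sum * ((r:ℂ) - 1) = (Q:ℂ) * (r:ℂ) := by
    rw [hP, msum_sum, Finset.sum_mul]
    rw [Finset.sum_congr rfl fun i _ => hsum_i i]
    rw [hQ]
    push_cast
    rw [Finset.sum_mul]
  have hPcard : Multiset.card P = Pc := by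
    rw [hP, mcard_sum, hPc]
    exact Finset.sum_congr rfl fun i _ => (Multiset.card_map _ _).trans (hcard_i i)
  -- decomposition of P
  have hnot : P.filter (fun x : ℂ => ¬(x ≠ 2 ∧ x ≠ α))
      = Multiset.replicate m2 2 + Multiset.replicate ma α := by
    apply Multiset.ext.mpr
    intro x
    rw [Multiset.count_filter, Multiset.count_add, Multiset.count_replicate,
      Multiset.count_replicate]
    by_cases h2 : x = 2
    · subst h2
      rw [if_pos (by simp), if_pos rfl, if_neg hα2]
      simp [hm2]
    · by_cases ha' : x = α
      · subst ha'
        rw [if_pos (by simp), if_neg (fun hcon => hα2 hcon.symm), if_pos rfl]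
        simp [hma]
      · rw [if_neg (show ¬¬(x ≠ 2 ∧ x ≠ α) by push_neg; exact ⟨h2, ha'⟩),
          if_neg (fun hcon => h2 hcon.symm), if_neg (fun hcon => ha' hcon.symm)]
  have hsplitP : M + (Multiset.replicate m2 2 + Multiset.replicate ma α) = P := by
    rw [hM, ← hnot]
    exact Multiset.filter_add_not _ P
  have hPsum2 : P.sum = M.sum + ((m2:ℂ) * 2 + (ma:ℂ) * α) := by
    rw [← hsplitP, Multiset.sum_add, Multiset.sum_add, Multiset.sum_replicate,
      Multiset.sum_replicate, nsmul_eq_mul, nsmul_eq_mul]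
  have hPcard2 : Pc = Multiset.card M + (m2 + ma) := by
    rw [← hPcard, ← hsplitP, Multiset.card_add, Multiset.card_add,
      Multiset.card_replicate, Multiset.card_replicate]
  have hMsum : M.sum = (Multiset.card M : ℂ) := by
    have h1 := congrArg Multiset.sum hsym
    rw [sum_map_two_sub] at h1
    linear_combination -h1/2
  -- the master equation over ℂ
  have hEC : ((Multiset.card M : ℂ)) * ((r:ℂ)-1) + 2*(m2:ℂ)*((r:ℂ)-1) + (ma:ℂ)*((r:ℂ)-2)
      = (Q:ℂ)*(r:ℂ) := by
    have e1 : P.sum * ((r:ℂ)-1) = ((Multiset.card M : ℂ) + (m2:ℂ)*2 + (ma:ℂ)*α) * ((r:ℂ)-1) := by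
      rw [hPsum2, hMsum]; ring
    rw [hPsum] at e1
    calc ((Multiset.card M : ℂ)) * ((r:ℂ)-1) + 2*(m2:ℂ)*((r:ℂ)-1) + (ma:ℂ)*((r:ℂ)-2)
        = ((Multiset.card M : ℂ) + (m2:ℂ)*2 + (ma:ℂ)*α) * ((r:ℂ)-1) := by
          rw [← hαr]; ring
      _ = (Q:ℂ)*(r:ℂ) := e1.symm
  -- transfer to ℚ
  have hEQ : ((Multiset.card M : ℚ)) * (r-1) + 2*(m2:ℚ)*(r-1) + (ma:ℚ)*(r-2) = (Q:ℚ)*r := by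
    exact_mod_cast hEC
  -- final contradiction over ℚ
  set cM : ℕ := Multiset.card M with hcM
  have hcMQ : (cM:ℚ) = (a:ℚ)*(D:ℚ) - (m2:ℚ) - (ma:ℚ) := by
    have : (Pc:ℚ) = (cM:ℚ) + ((m2:ℚ) + (ma:ℚ)) := by exact_mod_cast hPcard2
    have h2 : (Pc:ℚ) = (a:ℚ)*(D:ℚ) := by exact_mod_cast hPaD
    linarith
  have hQQ : (Q:ℚ) = (b:ℚ)*(D:ℚ) := by exact_mod_cast hQbD
  -- master: r*b*D*(r-2) = ma - m2*(r-1)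
  have hmaster : r*(b:ℚ)*(D:ℚ)*(r-2) = (ma:ℚ) - (m2:ℚ)*(r-1) := by
    have hth := hEQ
    rw [hcMQ, hQQ, haQ] at hth
    linear_combination hth
  have hDQ : (1:ℚ) ≤ (D:ℚ) := by exact_mod_cast hD1
  have hbQ : (1:ℚ) ≤ (b:ℚ) := by exact_mod_cast hbpos
  clear_value a b m2 ma Q Pc D cM
  have hm2Q : (m2:ℚ) ≤ (D:ℚ) := by exact_mod_cast hm2D
  have hmaQ : (ma:ℚ) ≤ (D:ℚ) := by exact_mod_cast hmaD
  have hm20 : (0:ℚ) ≤ (m2:ℚ) := Nat.cast_nonneg _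
  have hma0 : (0:ℚ) ≤ (ma:ℚ) := Nat.cast_nonneg _
  rcases lt_or_gt_of_ne hr2 with hlt | hgt
  · -- r < 2 : b*(2-r) ≥ 1
    have hba : a + 1 ≤ 2*b := by
      by_contra hcon
      push_neg at hcon
      have h3 : 2*b ≤ a := by omega
      have h4 : (2:ℚ)*(b:ℚ) ≤ (a:ℚ) := by exact_mod_cast h3
      rw [haQ] at h4
      nlinarith
    have h1 : (1:ℚ) ≤ (b:ℚ)*(2-r) := by
      have h5 : ((a:ℚ)) + 1 ≤ 2*(b:ℚ) := by exact_mod_cast hba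
      rw [haQ] at h5
      nlinarith
    have t1 : r*(D:ℚ)*((b:ℚ)*(2-r)) ≥ r*(D:ℚ)*1 :=
      mul_le_mul_of_nonneg_left h1 (by nlinarith : (0:ℚ) ≤ r*(D:ℚ))
    have t2 : (m2:ℚ)*(r-1) ≤ (D:ℚ)*(r-1) :=
      mul_le_mul_of_nonneg_right hm2Q (by linarith)
    have e1 : r*(b:ℚ)*(D:ℚ)*(r-2) = -(r*(D:ℚ)*((b:ℚ)*(2-r))) := by ring
    have e2 : (D:ℚ)*(r-1) - r*(D:ℚ) = -(D:ℚ) := by ring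
    linarith only [hmaster, t1, t2, hDQ, hma0, e1, e2]
  · -- r > 2 : b*(r-2) ≥ 1
    have hba : 2*b + 1 ≤ a := by
      by_contra hcon
      push_neg at hcon
      have h3 : a ≤ 2*b := by omega
      have h4 : (a:ℚ) ≤ 2*(b:ℚ) := by exact_mod_cast h3
      rw [haQ] at h4
      nlinarith
    have h1 : (1:ℚ) ≤ (b:ℚ)*(r-2) := by
      have h5 : 2*(b:ℚ) + 1 ≤ (a:ℚ) := by exact_mod_cast hba
      rw [haQ] at h5
      nlinarith
    have t1 : r*(D:ℚ)*((b:ℚ)*(r-2)) ≥ r*(D:ℚ)*1 :=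
      mul_le_mul_of_nonneg_left h1 (by nlinarith : (0:ℚ) ≤ r*(D:ℚ))
    have t3 : (0:ℚ) < (r-2)*(D:ℚ) := mul_pos (by linarith) (by linarith)
    have e1 : r*(b:ℚ)*(D:ℚ)*(r-2) = r*(D:ℚ)*((b:ℚ)*(r-2)) := by ring
    have e3 : r*(D:ℚ) - 2*(D:ℚ) = (r-2)*(D:ℚ) := by ring
    have hm2r : (0:ℚ) ≤ (m2:ℚ)*(r-1) := mul_nonneg hm20 (by linarith)
    linarith only [hmaster, t1, t3, hmaQ, hm2r, hDQ, e1, e3]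
end

section
/- Let p > q ≥ 1 be integers with r = p/q ≠ 2, let c ∈ ℂ \ {0}, and let W(θ) = (r−1)·θ^p − r·θ^{p−q} + c ∈ ℂ[θ] (with r viewed as a complex number). Let v be either of the two values 2 or (r−2)/(r−1). Then every root θ of W satisfying θ^q = v is a simple root of W, and the number of roots θ of W with θ^q = v is at most gcd(p, q). -/
open Polynomial
open scoped Classical

/-- For `W(θ) = (r-1)θ^p - r θ^{p-q} + c` with `r = p/q ≠ 2` and `c ≠ 0`, and for `v`
either of the values `2` and `(r-2)/(r-1)`: every root `θ` of `W` with `θ^q = v` is a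
simple root, and the number of such roots is at most `gcd(p, q)`. -/
theorem roots_with_prescribed_qth_power_bound
    (p q : ℕ) (hq : 1 ≤ q) (hpq : q < p) (hne2 : p ≠ 2 * q)
    (c : ℂ) (hc : c ≠ 0)
    (r : ℂ) (hr : r = (p : ℂ) / (q : ℂ))
    (W : Polynomial ℂ)
    (hW : W = Polynomial.C (r - 1) * X ^ p - Polynomial.C r * X ^ (p - q)
        + Polynomial.C c)
    (v : ℂ) (hv : v = 2 ∨ v = (r - 2) / (r - 1)) :
    (∀ θ : ℂ, W.eval θ = 0 → θ ^ q = v → W.derivative.eval θ ≠ 0) ∧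
      (W.roots.toFinset.filter (fun θ : ℂ => θ ^ q = v)).card ≤ Nat.gcd p q := by
  have hq0 : (q : ℂ) ≠ 0 := Nat.cast_ne_zero.mpr (by omega)
  have hp0 : (p : ℂ) ≠ 0 := Nat.cast_ne_zero.mpr (by omega)
  have hcast : ((p - q : ℕ) : ℂ) = (p : ℂ) - (q : ℂ) := by
    push_cast [Nat.cast_sub hpq.le]; ring
  have hsub : (p : ℂ) - (q : ℂ) ≠ 0 := by
    rw [sub_ne_zero]
    exact_mod_cast (by omega : p ≠ q)
  have hr1 : r - 1 ≠ 0 := by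
    rw [hr, sub_ne_zero]
    intro h
    exact hsub (by field_simp at h; rw [h]; ring)
  have hr2 : r - 2 ≠ 0 := by
    rw [hr, sub_ne_zero]
    intro h
    have : (p : ℂ) = 2 * q := by field_simp at h; linear_combination h
    exact hne2 (by exact_mod_cast this)
  have hv1 : v ≠ 1 := by
    rcases hv with rfl | rfl
    · norm_num
    · intro h
      rw [div_eq_one_iff_eq hr1] at h
      simp at h
  have hv0 : v ≠ 0 := by
    rcases hv with rfl | rfl
    · norm_num
    · exact div_ne_zero hr2 hr1
  have hk : (r - 1) * v - r ≠ 0 := by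
    rcases hv with rfl | rfl
    · have : (r - 1) * 2 - r = r - 2 := by ring
      rw [this]; exact hr2
    · rw [mul_div_cancel₀ _ hr1]
      norm_num
  -- evaluation formula
  have heval : ∀ θ : ℂ, θ ^ q = v →
      W.eval θ = ((r - 1) * v - r) * θ ^ (p - q) + c := by
    intro θ hθ
    have hpow : θ ^ p = θ ^ (p - q) * θ ^ q := by
      rw [← pow_add]; congr 1; omega
    rw [hW]
    simp only [eval_add, eval_sub, eval_mul, eval_pow, eval_C, eval_X]
    rw [hpow, hθ]; ring
  have hθ0 : ∀ θ : ℂ, θ ^ q = v → θ ≠ 0 := by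
    rintro θ hθ rfl
    rw [zero_pow (by omega : q ≠ 0)] at hθ
    exact hv0 hθ.symm
  constructor
  · -- simple roots
    intro θ hroot hθq
    have hθ : θ ≠ 0 := hθ0 θ hθq
    have hder : W.derivative.eval θ = (r - 1) * p * θ ^ (p - 1)
        - r * ((p : ℂ) - q) * θ ^ (p - q - 1) := by
      rw [hW]
      simp only [derivative_add, derivative_sub, derivative_C, derivative_C_mul,
        derivative_X_pow, eval_add, eval_sub, eval_mul, eval_pow, eval_C, eval_X,
        eval_natCast, eval_zero, hcast]
      ring
    rw [hder]
    have h1 : θ ^ (p - 1) = θ ^ (p - q - 1) * θ ^ q := by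
      rw [← pow_add]; congr 1; omega
    rw [h1, hθq]
    have : (r - 1) * p * (θ ^ (p - q - 1) * v) - r * ((p : ℂ) - q) * θ ^ (p - q - 1)
        = θ ^ (p - q - 1) * ((r - 1) * p * v - r * ((p : ℂ) - q)) := by ring
    rw [this]
    apply mul_ne_zero (pow_ne_zero _ hθ)
    have hcoef : (r - 1) * p * v - r * ((p : ℂ) - q)
        = (p : ℂ) * ((p : ℂ) - q) / q * (v - 1) := by
      rw [hr]; field_simp
    rw [hcoef]
    exact mul_ne_zero (div_ne_zero (mul_ne_zero hp0 hsub) hq0) (sub_ne_zero.mpr hv1)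
  · -- cardinality bound
    set g := Nat.gcd p q with hg
    have hg0 : 0 < g := Nat.gcd_pos_of_pos_right p (by omega)
    have hgdvd : g ∣ q ∧ g ∣ (p - q) := by
      constructor
      · exact Nat.gcd_dvd_right p q
      · exact (Nat.dvd_sub (Nat.gcd_dvd_left p q) (Nat.gcd_dvd_right p q))
    set F := W.roots.toFinset.filter (fun θ : ℂ => θ ^ q = v) with hF
    rcases F.eq_empty_or_nonempty with hFe | ⟨θ₀, hθ₀⟩
    · simp [hFe]
    · have hmem : ∀ θ ∈ F, θ ^ q = v ∧ θ ^ (p - q) = -c / ((r - 1) * v - r) := by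
        intro θ hθ
        rw [hF, Finset.mem_filter, Multiset.mem_toFinset] at hθ
        obtain ⟨hroots, hθq⟩ := hθ
        have hW0 : W ≠ 0 := by
          intro h
          simp [h] at hroots
        have heval0 : W.eval θ = 0 := by
          rw [mem_roots hW0] at hroots
          exact hroots
        refine ⟨hθq, ?_⟩
        rw [heval θ hθq] at heval0
        rw [eq_div_iff hk]
        linear_combination heval0
      have hsame : ∀ θ ∈ F, θ ^ g = θ₀ ^ g := by
        intro θ hθF
        obtain ⟨hq1, hw1⟩ := hmem θ hθF
        obtain ⟨hq2, hw2⟩ := hmem θ₀ hθ₀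
        have hθ₀ne : θ₀ ≠ 0 := hθ0 θ₀ hq2
        have hζq : (θ / θ₀) ^ q = 1 := by
          rw [div_pow, hq1, hq2, div_self hv0]
        have hζpq : (θ / θ₀) ^ (p - q) = 1 := by
          rw [div_pow, hw1, hw2, div_self]
          exact div_ne_zero (neg_ne_zero.mpr hc) hk
        have hord : (θ / θ₀) ^ g = 1 := by
          have h1 := orderOf_dvd_of_pow_eq_one hζq
          have h2 := orderOf_dvd_of_pow_eq_one hζpq
          have h3 : orderOf (θ / θ₀) ∣ Nat.gcd q (p - q) := Nat.dvd_gcd h1 h2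
          have hgeq : Nat.gcd q (p - q) = g := by
            rw [hg, Nat.gcd_comm p q]
            conv_rhs => rw [show p = (p - q) + q by omega]
            rw [Nat.gcd_add_self_right]
          rw [hgeq] at h3
          exact orderOf_dvd_iff_pow_eq_one.mp h3
        rw [div_pow, div_eq_one_iff_eq (pow_ne_zero g hθ₀ne)] at hord
        exact hord
      set P : Polynomial ℂ := X ^ g - Polynomial.C (θ₀ ^ g) with hP
      have hPne : P ≠ 0 := X_pow_sub_C_ne_zero hg0 _
      have hsubset : F ⊆ P.roots.toFinset := by
        intro θ hθF
        rw [Multiset.mem_toFinset, mem_roots hPne]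
        simp [hP, IsRoot, sub_eq_zero, hsame θ hθF]
      calc F.card ≤ P.roots.toFinset.card := Finset.card_le_card hsubset
        _ ≤ Multiset.card P.roots := Multiset.toFinset_card_le _
        _ ≤ P.natDegree := P.card_roots'
        _ = g := by rw [hP, natDegree_X_pow_sub_C]
end
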